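/- arXiv:math/0510216 — 5 statements merged into one kernel-verified Lean document; each statement's English description precedes it below -/
import Mathlib

section
/- The characteristic polynomial of the Coxeter transformation of the Dynkin diagram Aₙ is λⁿ + λⁿ⁻¹ + ⋯ + λ + 1 = (λⁿ⁺¹ − 1)/(λ − 1). -/
open Polynomial Matrix

noncomputable section
open scoped Classical

/-- The (generalized) Cartan matrix of a simply-laced graph `G`:
`2` on the diagonal, `-1` for adjacent vertices, `0` otherwise. -/
def cartanOf (R : Type*) [CommRing R] {V : Type*} (G : SimpleGraph V) : Matrix V V R :=
  fun i j => if i = j then 2 else if G.Adj i j then -1 else 0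

/-- The matrix of the simple reflection `σ_i(x) = x - φ_i(x) α_i` associated to the
`i`-th row of a generalized Cartan matrix `K`. -/
def reflOf (R : Type*) [CommRing R] {V : Type*} (K : Matrix V V R) (i : V) : Matrix V V R :=
  fun j k => (if j = k then 1 else 0) - (if j = i then K i k else 0)

/-- The Coxeter transformation associated to the generalized Cartan matrix `K`:
the product of all simple reflections taken in the order given by the list `L`. -/
def coxeterOf (R : Type*) [CommRing R] {V : Type*} [Fintype V] [DecidableEq V]
    (K : Matrix V V R) (L : List V) : Matrix V V R :=
  (L.map (reflOf R K)).prod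

/-- `L` is an enumeration of the (finite) vertex set: each vertex occurs exactly once. -/
def IsEnum {V : Type*} (L : List V) : Prop := L.Nodup ∧ ∀ v, v ∈ L

end

noncomputable section
open scoped Classical

section Aux
variable {R : Type*} [CommRing R] {V : Type*} [Fintype V] [DecidableEq V] (K : Matrix V V R)

def Emat (v : V) : Matrix V V R := fun j k => if j = v ∧ k = v then 1 else 0

def Pmat : List V → Matrix V V R
  | [] => 0
  | v :: M => Emat v + Pmat M

def Cmat : List V → Matrix V V R
  | [] => 1
  | v :: M => Cmat M + Emat v * K * Pmat M

lemma Emat_mul_apply (u j k : V) (A : Matrix V V R) :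
    ((Emat u * A : Matrix V V R) j k) = if j = u then A u k else 0 := by
  by_cases h : j = u <;> simp [Emat, Matrix.mul_apply, h]

lemma mul_Emat_apply (u j k : V) (A : Matrix V V R) :
    ((A * Emat u : Matrix V V R) j k) = if k = u then A j u else 0 := by
  by_cases h : k = u <;> simp [Emat, Matrix.mul_apply, h]

lemma reflOf_eq (u : V) : reflOf R K u = 1 - Emat u * K := by
  funext j k
  by_cases h1 : j = k <;> by_cases h2 : j = u <;>
    simp [reflOf, Matrix.sub_apply, Emat_mul_apply, Matrix.one_apply, h1, h2]

lemma Emat_mul_Emat {v u : V} (h : v ≠ u) : (Emat v : Matrix V V R) * Emat u = 0 := by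
  funext j k
  rw [Emat_mul_apply]
  simp [Emat, h]

lemma Emat_mul_self (v : V) : (Emat v : Matrix V V R) * Emat v = Emat v := by
  funext j k
  rw [Emat_mul_apply]
  by_cases h : j = v <;> simp [Emat, h]

lemma Pmat_mul_Emat {v : V} : ∀ {M : List V}, v ∉ M → (Pmat M : Matrix V V R) * Emat v = 0
  | [], _ => by simp [Pmat]
  | w :: M, h => by
    have hv : w ≠ v := fun e => h (e ▸ List.mem_cons_self)
    have hM : v ∉ M := fun e => h (List.mem_cons_of_mem _ e)
    simp [Pmat, add_mul, Emat_mul_Emat hv, Pmat_mul_Emat hM]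

lemma Cmat_mul_Emat {v : V} : ∀ {M : List V}, v ∉ M → (Cmat K M) * Emat v = Emat v
  | [], _ => by simp [Cmat]
  | w :: M, h => by
    have hM : v ∉ M := fun e => h (List.mem_cons_of_mem _ e)
    simp [Cmat, add_mul, mul_assoc, Pmat_mul_Emat hM, Cmat_mul_Emat hM]

lemma Emat_mul_refl {w u : V} (h : w ≠ u) : (Emat w : Matrix V V R) * reflOf R K u = Emat w := by
  rw [reflOf_eq, mul_sub, mul_one, ← mul_assoc, Emat_mul_Emat h, zero_mul, sub_zero]

lemma coxeterOf_cons (v : V) (M : List V) :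
    coxeterOf R K (v :: M) = reflOf R K v * coxeterOf R K M := by
  simp [coxeterOf]

lemma Emat_mul_coxeter {w : V} : ∀ {M : List V}, w ∉ M →
    (Emat w : Matrix V V R) * coxeterOf R K M = Emat w
  | [], _ => by simp [coxeterOf]
  | u :: M, h => by
    have hu : w ≠ u := fun e => h (e ▸ List.mem_cons_self)
    have hM : w ∉ M := fun e => h (List.mem_cons_of_mem _ e)
    rw [coxeterOf_cons, ← mul_assoc, Emat_mul_refl K hu, Emat_mul_coxeter hM]

lemma one_sub_Pmat_mul_coxeter : ∀ {M : List V}, M.Nodup →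
    (1 - Pmat M : Matrix V V R) * coxeterOf R K M = 1 - Pmat M
  | [], _ => by simp [coxeterOf, Pmat]
  | w :: M, h => by
    have hw : w ∉ M := (List.nodup_cons.mp h).1
    have hM : M.Nodup := (List.nodup_cons.mp h).2
    have hPE : (Pmat (w :: M) : Matrix V V R) * Emat w = Emat w := by
      show (Emat w + Pmat M) * Emat w = Emat w
      rw [add_mul, Emat_mul_self, Pmat_mul_Emat hw, add_zero]
    have step : (1 - Pmat (w :: M) : Matrix V V R) * reflOf R K w = 1 - Pmat (w :: M) := by
      rw [reflOf_eq, mul_sub, mul_one, sub_mul, one_mul, ← mul_assoc, hPE]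
      noncomm_ring
    rw [coxeterOf_cons, ← mul_assoc, step]
    show (1 - (Emat w + Pmat M)) * coxeterOf R K M = _
    have e1 : (1 - (Emat w + Pmat M) : Matrix V V R) = (1 - Pmat M) - Emat w := by noncomm_ring
    rw [e1, sub_mul, one_sub_Pmat_mul_coxeter hM, Emat_mul_coxeter K hw]
    show _ = 1 - (Emat w + Pmat M)
    noncomm_ring

lemma Cmat_mul_coxeter : ∀ {M : List V}, M.Nodup →
    (Cmat K M) * coxeterOf R K M = Cmat K M - Pmat M * K
  | [], _ => by simp [coxeterOf, Cmat, Pmat]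
  | v :: M, h => by
    have hv : v ∉ M := (List.nodup_cons.mp h).1
    have hM : M.Nodup := (List.nodup_cons.mp h).2
    rw [coxeterOf_cons, ← mul_assoc]
    have expand : (Cmat K (v :: M)) * reflOf R K v
        = Cmat K M - Emat v * K * (1 - Pmat M) := by
      show (Cmat K M + Emat v * K * Pmat M) * reflOf R K v = _
      rw [reflOf_eq, mul_sub, mul_one, add_mul (Cmat K M), ← mul_assoc, ← mul_assoc,
        Cmat_mul_Emat K hv, mul_assoc (Emat v * K) (Pmat M) (Emat v), Pmat_mul_Emat hv,
        mul_zero]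
      noncomm_ring
    rw [expand, sub_mul, Cmat_mul_coxeter hM, mul_assoc, one_sub_Pmat_mul_coxeter K hM]
    show _ = Cmat K M + Emat v * K * Pmat M - (Emat v + Pmat M) * K
    noncomm_ring

end Aux

section Aux2
variable {R : Type*} [CommRing R] {V : Type*} [Fintype V] [DecidableEq V] (K : Matrix V V R)

lemma Pmat_apply : ∀ (M : List V), M.Nodup → ∀ (i j : V),
    (Pmat M : Matrix V V R) i j = if i = j ∧ i ∈ M then 1 else 0
  | [], _, i, j => by simp [Pmat]
  | w :: M, h, i, j => by
    have hw : w ∉ M := (List.nodup_cons.mp h).1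
    have hM : M.Nodup := (List.nodup_cons.mp h).2
    show (Emat w + Pmat M : Matrix V V R) i j = _
    rw [Matrix.add_apply, Pmat_apply M hM i j]
    by_cases h1 : i = j <;> by_cases h2 : i = w <;> simp_all [Emat] <;>
      exact fun e => absurd e.symm h1

lemma Pmat_enum (L : List V) (hL : IsEnum L) : (Pmat L : Matrix V V R) = 1 := by
  funext i j
  rw [Pmat_apply _ hL.1, Matrix.one_apply]
  simp [hL.2 i]

lemma Cmat_apply : ∀ (M : List V), M.Nodup → ∀ (i j : V),
    (Cmat K M) i j = if i = j then 1
      else if i ∈ M ∧ j ∈ M ∧ M.idxOf i < M.idxOf j then K i j else 0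
  | [], _, i, j => by
    by_cases h : i = j <;> simp [Cmat, Matrix.one_apply, h]
  | w :: M, h, i, j => by
    have hw : w ∉ M := (List.nodup_cons.mp h).1
    have hM : M.Nodup := (List.nodup_cons.mp h).2
    show (Cmat K M + Emat w * K * Pmat M : Matrix V V R) i j = _
    have hEKP : (Emat w * K * Pmat M : Matrix V V R) i j
        = if i = w ∧ j ∈ M then K w j else 0 := by
      rw [Matrix.mul_apply]
      have : ∀ m : V, (Emat w * K : Matrix V V R) i m * (Pmat M : Matrix V V R) m j
          = if m = j then (if i = w ∧ j ∈ M then K w j else 0) else 0 := by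
        intro m
        rw [Emat_mul_apply, Pmat_apply M hM]
        by_cases h1 : m = j <;> by_cases h2 : i = w <;> by_cases h3 : j ∈ M <;>
          by_cases h4 : m = w <;> simp_all [h1, h2, h3, h4]
      rw [Finset.sum_congr rfl fun m _ => this m, Finset.sum_ite_eq' Finset.univ j]
      simp
    rw [Matrix.add_apply, hEKP, Cmat_apply M hM i j]
    by_cases hij : i = j
    · subst hij
      have : ¬ (i = w ∧ i ∈ M) := fun ⟨e, m⟩ => hw (e ▸ m)
      simp [this]
    · simp only [if_neg hij]
      by_cases hiw : i = w
      · subst hiw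
        have hiM : i ∉ M := hw
        have h1 : ¬ (i ∈ M ∧ j ∈ M ∧ M.idxOf i < M.idxOf j) := fun ⟨e, _⟩ => hiM e
        rw [if_neg h1, zero_add]
        by_cases hjM : j ∈ M
        · have hj : j ∈ i :: M := List.mem_cons_of_mem _ hjM
          have hidx : (i :: M).idxOf i = 0 := List.idxOf_cons_self
          have hjdx : (i :: M).idxOf j = (M.idxOf j) + 1 :=
            List.idxOf_cons_ne M (fun e => hij e)
          simp [hjM, hj, hidx, hjdx]
        · have hjn : j ∉ i :: M := by
            intro hjc
            rcases List.mem_cons.mp hjc with e | e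
            · exact hij e.symm
            · exact hjM e
          simp [hjM, hjn]
      · have hredw : ¬ (i = w ∧ j ∈ M) := fun ⟨e, _⟩ => hiw e
        rw [if_neg hredw, add_zero]
        have hiC : i ∈ w :: M ↔ i ∈ M := by
          constructor
          · intro hi; rcases List.mem_cons.mp hi with e | e
            · exact absurd e hiw
            · exact e
          · exact List.mem_cons_of_mem _
        by_cases hiM : i ∈ M
        · have hi' : i ∈ w :: M := List.mem_cons_of_mem _ hiM
          by_cases hjM : j ∈ M
          · have hj' : j ∈ w :: M := List.mem_cons_of_mem _ hjM
            have hiiw : (w :: M).idxOf i = M.idxOf i + 1 :=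
              List.idxOf_cons_ne M (fun e => hiw e.symm)
            by_cases hjw : j = w
            · exact absurd (hjw ▸ hjM) hw
            · have hjjw : (w :: M).idxOf j = M.idxOf j + 1 :=
                List.idxOf_cons_ne M (fun e => hjw e.symm)
              simp only [hiM, hjM, hi', hj', hiiw, hjjw, true_and]
              simp [Nat.add_lt_add_iff_right]
          · -- j ∉ M
            by_cases hjw : j = w
            · subst hjw
              have h0 : (j :: M).idxOf j = 0 := List.idxOf_cons_self
              have hiiw2 : (j :: M).idxOf i = M.idxOf i + 1 :=
                List.idxOf_cons_ne M (fun e => hiw e.symm)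
              have : ¬ ((j :: M).idxOf i < (j :: M).idxOf j) := by omega
              simp [hjM, this]
            · have hjn : j ∉ w :: M := by
                intro hj; rcases List.mem_cons.mp hj with e | e
                · exact hjw e
                · exact hjM e
              simp [hjM, hjn]
        · have : i ∉ w :: M := fun hi => hiM (hiC.mp hi)
          simp [hiM, this]
  termination_by M => M.length

end Aux2

section Aux3
variable {R : Type*} [CommRing R] {V : Type*} [Fintype V] [DecidableEq V] (K : Matrix V V R)

lemma Cmat_det_one (L : List V) (hL : IsEnum L) : (Cmat K L).det = 1 := by
  classical
  let e : Fin L.length ≃ V := hL.1.getEquivOfForallMemList L hL.2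
  have hdet : ((Cmat K L).submatrix e e).det = (Cmat K L).det :=
    Matrix.det_submatrix_equiv_self e _
  have hidx : ∀ i : Fin L.length, L.idxOf (e i) = (i : ℕ) := by
    intro i
    have : e.symm (e i) = i := e.symm_apply_apply i
    have h2 : (e.symm (e i) : Fin L.length) = ⟨L.idxOf (e i), _⟩ := rfl
    rw [this] at h2
    exact congrArg Fin.val h2.symm
  have htri : ((Cmat K L).submatrix e e).BlockTriangular id := by
    intro i j hji
    have hne : e i ≠ e j := by
      intro h
      have h' : i = j := e.injective h
      subst h'
      exact lt_irrefl _ hji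
    have : (Cmat K L) (e i) (e j) = 0 := by
      rw [Cmat_apply K L hL.1, if_neg hne, if_neg]
      rintro ⟨-, -, hlt⟩
      rw [hidx i, hidx j] at hlt
      exact absurd hlt (not_lt.mpr (le_of_lt hji))
    simpa [Matrix.submatrix_apply] using this
  have hdiag : ∀ i, ((Cmat K L).submatrix e e) i i = 1 := by
    intro i
    simp [Matrix.submatrix_apply, Cmat_apply K L hL.1]
  rw [← hdet, Matrix.det_of_upperTriangular htri]
  exact Finset.prod_eq_one fun i _ => by simp [Matrix.submatrix_apply, Cmat_apply K L hL.1]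

lemma charpoly_coxeter_eq_det (L : List V) (hL : IsEnum L) :
    (coxeterOf R K L).charpoly
      = ((X - 1 : R[X]) • (Cmat K L).map (C : R →+* R[X]) + K.map (C : R →+* R[X])).det := by
  classical
  have h1 : Cmat K L * coxeterOf R K L = Cmat K L - K := by
    rw [Cmat_mul_coxeter K hL.1, Pmat_enum L hL, one_mul]
  have h2 : ((Cmat K L).map (C : R →+* R[X])) * charmatrix (coxeterOf R K L)
      = (X - 1 : R[X]) • (Cmat K L).map (C : R →+* R[X]) + K.map (C : R →+* R[X]) := by
    rw [charmatrix]
    rw [mul_sub]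
    have hs : ((Cmat K L).map (C : R →+* R[X])) * Matrix.scalar V (X : R[X])
        = (X : R[X]) • ((Cmat K L).map (C : R →+* R[X])) := by
      funext i j
      rw [Matrix.scalar_apply, Matrix.mul_diagonal, Matrix.smul_apply]
      rw [smul_eq_mul, mul_comm]
    rw [hs]
    have hm : ((Cmat K L).map (C : R →+* R[X])) * (C : R →+* R[X]).mapMatrix (coxeterOf R K L)
        = ((Cmat K L) * coxeterOf R K L).map (C : R →+* R[X]) := by
      simp [RingHom.mapMatrix_apply, Matrix.map_mul]
    rw [hm, h1]
    have : ((Cmat K L - K).map (C : R →+* R[X]))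
        = (Cmat K L).map (C : R →+* R[X]) - K.map (C : R →+* R[X]) := by
      simp [Matrix.map_sub]
    rw [this, sub_smul, one_smul]
    noncomm_ring
  have hdet := congrArg Matrix.det h2
  rw [Matrix.det_mul] at hdet
  have hC : ((Cmat K L).map (C : R →+* R[X])).det = 1 := by
    have := (C : R →+* R[X]).map_det (Cmat K L)
    rw [Cmat_det_one K L hL, _root_.map_one, RingHom.mapMatrix_apply] at this
    exact this.symm
  rw [Matrix.charpoly, ← hdet, hC, one_mul]

end Aux3

section Tri
variable {R : Type*} [CommRing R]

/-- tridiagonal matrix with diagonal `X+1` and, for each adjacent pair, entries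
`-X`/`-1` with orientation given by `f`. -/
def triA (R : Type*) [CommRing R] (n : ℕ) (f : ℕ → Bool) : Matrix (Fin n) (Fin n) R[X] :=
  Matrix.of fun i j =>
    if (i : ℕ) = j then X + 1
    else if (i : ℕ) + 1 = j then (if f i then -X else -1)
    else if (j : ℕ) + 1 = i then (if f j then -1 else -X) else 0

lemma triA_subm1 (n : ℕ) (f : ℕ → Bool) :
    (triA R (n + 2) f).submatrix Fin.succ Fin.succ = triA R (n + 1) (fun k => f (k + 1)) := by
  funext i j
  simp only [Matrix.submatrix_apply, triA, Matrix.of_apply, Fin.val_succ]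
  split_ifs <;> first | rfl | omega

lemma triA_det : ∀ (n : ℕ) (f : ℕ → Bool),
    (triA R n f).det = ∑ i ∈ Finset.range (n + 1), (X : R[X]) ^ i
  | 0, f => by simp [triA]
  | 1, f => by
    rw [Matrix.det_fin_one]
    simp [triA, Finset.sum_range_succ]
    ring
  | n + 2, f => by
    have hrec1 := triA_det (n + 1) (fun k => f (k + 1))
    have hrec0 := triA_det n (fun k => f (k + 2))
    rw [Matrix.det_succ_row_zero, Fin.sum_univ_succ, Fin.sum_univ_succ]
    have htail : ∀ x : Fin n,
        ((-1 : R[X]) ^ ((x.succ.succ : Fin (n + 2)) : ℕ) * triA R (n + 2) f 0 x.succ.succ *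
          ((triA R (n + 2) f).submatrix Fin.succ (x.succ.succ).succAbove).det) = 0 := by
      intro x
      have : triA R (n + 2) f 0 x.succ.succ = 0 := by
        simp only [triA, Matrix.of_apply, Fin.val_succ, Fin.val_zero]
        have h1 : (0 : ℕ) ≠ (x : ℕ) + 1 + 1 := by omega
        have h2 : (0 : ℕ) + 1 ≠ (x : ℕ) + 1 + 1 := by omega
        have h3 : (x : ℕ) + 1 + 1 + 1 ≠ 0 := by omega
        exact (if_neg h1).trans ((if_neg h2).trans (if_neg h3))
      rw [this, mul_zero, zero_mul]
    rw [Finset.sum_congr rfl fun x _ => htail x, Finset.sum_const_zero, add_zero]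
    -- entries of the first row
    have h00 : triA R (n + 2) f 0 0 = X + 1 := by simp [triA]
    have h01 : triA R (n + 2) f 0 (Fin.succ 0) = (if f 0 then -X else -1) := by
      simp [triA]
      exact if_congr Iff.rfl rfl rfl
    -- first minor
    have hm0 : ((triA R (n + 2) f).submatrix Fin.succ ((0 : Fin (n+2)).succAbove)).det
        = ∑ i ∈ Finset.range (n + 2), (X : R[X]) ^ i := by
      rw [Fin.succAbove_zero, triA_subm1, hrec1]
    -- second minor
    have hm1 : ((triA R (n + 2) f).submatrix Fin.succ ((Fin.succ 0 : Fin (n+2)).succAbove)).det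
        = (if f 0 then (-1 : R[X]) else -X) * ∑ i ∈ Finset.range (n + 1), (X : R[X]) ^ i := by
      set N := (triA R (n + 2) f).submatrix Fin.succ ((Fin.succ 0 : Fin (n+2)).succAbove) with hN
      rw [Matrix.det_succ_column_zero, Fin.sum_univ_succ]
      have hsA0 : ((Fin.succ 0 : Fin (n+2)).succAbove 0) = 0 := by
        apply Fin.succAbove_of_castSucc_lt
        simp [Fin.lt_def]
      have hN00 : N 0 0 = (if f 0 then (-1 : R[X]) else -X) := by
        rw [hN, Matrix.submatrix_apply, hsA0]
        simp [triA]
        exact if_congr Iff.rfl rfl rfl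
      have htail2 : ∀ x : Fin n,
          ((-1 : R[X]) ^ ((x.succ : Fin (n + 1)) : ℕ) * N x.succ 0 *
            ((N.submatrix (x.succ).succAbove Fin.succ).det)) = 0 := by
        intro x
        have : N x.succ 0 = 0 := by
          rw [hN, Matrix.submatrix_apply, hsA0]
          simp only [triA, Matrix.of_apply, Fin.val_succ, Fin.val_zero]
          have h1 : (x : ℕ) + 1 + 1 ≠ 0 := by omega
          have h2 : (x : ℕ) + 1 + 1 + 1 ≠ 0 := by omega
          have h3 : (0 : ℕ) + 1 ≠ (x : ℕ) + 1 + 1 := by omega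
          exact (if_neg h1).trans ((if_neg h2).trans (if_neg h3))
        rw [this, mul_zero, zero_mul]
      rw [Finset.sum_congr rfl fun x _ => htail2 x, Finset.sum_const_zero, add_zero]
      have hminor : (N.submatrix ((0 : Fin (n+1)).succAbove) Fin.succ)
          = triA R n (fun k => f (k + 2)) := by
        rw [Fin.succAbove_zero]
        funext i j
        rw [hN]
        simp only [Matrix.submatrix_apply]
        have hsA : ((Fin.succ 0 : Fin (n+2)).succAbove j.succ) = j.succ.succ := by
          apply Fin.succAbove_of_le_castSucc
          simp [Fin.le_def]
        rw [hsA]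
        simp only [triA, Matrix.of_apply, Fin.val_succ]
        split_ifs <;> first | rfl | omega
      rw [hminor, hrec0, hN00]
      simp
    rw [h00, h01, hm0, hm1]
    have hprod : (if f 0 then (-X : R[X]) else -1) * ((if f 0 then (-1 : R[X]) else -X)) = X := by
      cases hf : f 0 <;> simp <;> ring
    rw [Finset.sum_range_succ (fun i => (X : R[X]) ^ i) (n + 2),
      Finset.sum_range_succ (fun i => (X : R[X]) ^ i) (n + 1)]
    simp only [Fin.val_zero, pow_zero, one_mul, Fin.val_succ, zero_add, pow_one]
    cases hf : f 0 <;> (first | (simp [hf]; ring) | (simp [hf]; ring_nf))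

end Tri

section Final

def idxN (n : ℕ) (L : List (Fin n)) : ℕ → ℕ :=
  fun m => if h : m < n then L.idxOf (⟨m, h⟩ : Fin n) else 0

def fOf (n : ℕ) (L : List (Fin n)) : ℕ → Bool :=
  fun k => decide (idxN n L k < idxN n L (k + 1))

lemma idxN_val {n : ℕ} (L : List (Fin n)) (i : Fin n) : idxN n L (i : ℕ) = L.idxOf i := by
  rw [idxN, dif_pos i.isLt]

lemma key_matrix_eq (n : ℕ) (L : List (Fin n)) (hL : IsEnum L) :
    (X - 1 : ℚ[X]) • (Cmat (cartanOf ℚ (SimpleGraph.pathGraph n)) L).map (C : ℚ →+* ℚ[X])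
        + (cartanOf ℚ (SimpleGraph.pathGraph n)).map (C : ℚ →+* ℚ[X])
      = triA ℚ n (fOf n L) := by
  funext i j
  rw [Matrix.add_apply, Matrix.smul_apply, Matrix.map_apply, Matrix.map_apply,
    Cmat_apply _ L hL.1, smul_eq_mul]
  have hKd : cartanOf ℚ (SimpleGraph.pathGraph n) i i = 2 := by simp [cartanOf]
  by_cases hij : i = j
  · subst hij
    rw [if_pos rfl, hKd]
    simp only [triA, Matrix.of_apply, if_pos rfl]
    rw [if_pos trivial, _root_.map_one, map_ofNat]
    ring
  · rw [if_neg hij]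
    have hijv : (i : ℕ) ≠ (j : ℕ) := fun h => hij (Fin.ext h)
    have hiL := hL.2 i
    have hjL := hL.2 j
    have hidxne : L.idxOf i ≠ L.idxOf j :=
      fun h => hij ((List.idxOf_inj hiL).mp h)
    by_cases hadj1 : (i : ℕ) + 1 = (j : ℕ)
    · have hadj : (SimpleGraph.pathGraph n).Adj i j := by
        rw [SimpleGraph.pathGraph_adj]; left; exact hadj1
      have hKij : cartanOf ℚ (SimpleGraph.pathGraph n) i j = -1 := by
        simp [cartanOf, hij, hadj]
      have hf : fOf n L (i : ℕ) = decide (L.idxOf i < L.idxOf j) := by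
        simp only [fOf, hadj1, idxN_val]
      have htri : triA ℚ n (fOf n L) i j
          = if L.idxOf i < L.idxOf j then -X else -1 := by
        simp only [triA, Matrix.of_apply, if_neg hijv, if_pos hadj1, hf]
        by_cases hlt : L.idxOf i < L.idxOf j <;> simp [hlt]
      rw [htri, hKij]
      by_cases hlt : L.idxOf i < L.idxOf j
      · rw [if_pos ⟨hiL, hjL, hlt⟩, if_pos hlt]
        simp only [map_neg, map_zero, _root_.map_one]
        ring
      · rw [if_neg (fun h => hlt h.2.2), if_neg hlt]
        simp only [map_neg, map_zero, _root_.map_one]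
        ring
    · by_cases hadj2 : (j : ℕ) + 1 = (i : ℕ)
      · have hadj : (SimpleGraph.pathGraph n).Adj i j := by
          rw [SimpleGraph.pathGraph_adj]; right; exact hadj2
        have hKij : cartanOf ℚ (SimpleGraph.pathGraph n) i j = -1 := by
          simp [cartanOf, hij, hadj]
        have hf : fOf n L (j : ℕ) = decide (L.idxOf j < L.idxOf i) := by
          simp only [fOf, hadj2, idxN_val]
        have htri : triA ℚ n (fOf n L) i j
            = if L.idxOf j < L.idxOf i then -1 else -X := by
          simp only [triA, Matrix.of_apply, if_neg hijv, if_neg hadj1, if_pos hadj2, hf]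
          by_cases hlt : L.idxOf j < L.idxOf i <;> simp [hlt]
        rw [htri, hKij]
        by_cases hlt : L.idxOf i < L.idxOf j
        · rw [if_pos ⟨hiL, hjL, hlt⟩, if_neg (by omega)]
          simp only [map_neg, map_zero, _root_.map_one]
          ring
        · rw [if_neg (fun h => hlt h.2.2),
            if_pos (by omega : L.idxOf j < L.idxOf i)]
          simp only [map_neg, map_zero, _root_.map_one]
          ring
      · have hnadj : ¬ (SimpleGraph.pathGraph n).Adj i j := by
          rw [SimpleGraph.pathGraph_adj]
          push_neg
          exact ⟨hadj1, hadj2⟩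
        have hKij : cartanOf ℚ (SimpleGraph.pathGraph n) i j = 0 := by
          simp [cartanOf, hij, hnadj]
        have htri : triA ℚ n (fOf n L) i j = 0 := by
          simp only [triA, Matrix.of_apply, if_neg hijv, if_neg hadj1, if_neg hadj2]
        rw [htri, hKij]
        by_cases hlt : L.idxOf i < L.idxOf j
        · rw [if_pos ⟨hiL, hjL, hlt⟩]
          simp
        · rw [if_neg (fun h => hlt h.2.2)]
          simp

end Final

end

/-- The characteristic polynomial of the Coxeter transformation of the Dynkin diagram
`Aₙ` (the path graph on `n` vertices), taken with respect to any ordering of the simple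
reflections, is `λⁿ + λⁿ⁻¹ + ⋯ + λ + 1 = (λⁿ⁺¹ − 1)/(λ − 1)`. -/
theorem charpoly_coxeter_A (n : ℕ) (L : List (Fin n)) (hL : IsEnum L) :
    (coxeterOf ℚ (cartanOf ℚ (SimpleGraph.pathGraph n)) L).charpoly
      = ∑ i ∈ Finset.range (n + 1), X ^ i ∧
    (X - 1) * ∑ i ∈ Finset.range (n + 1), (X : ℚ[X]) ^ i = X ^ (n + 1) - 1 := by
  constructor
  · rw [charpoly_coxeter_eq_det _ L hL, key_matrix_eq n L hL, triA_det]
  · exact mul_geom_sum (X : ℚ[X]) (n + 1)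
end

section
/- The spectral radius of the polynomial family χ(T₂,₃,ᵣ)(λ) = λ^{r+3} + λ^{r+2} − (λ³ + λ⁴ + ⋯ + λʳ) + λ + 1 converges, as r → ∞, to the real root of λ³ − λ − 1 = 0, namely the plastic number ∛(1/2 + √(23/108)) + ∛(1/2 − √(23/108)) ≈ 1.324717. -/
open Polynomial Filter

noncomputable section

/-- The characteristic polynomial of the Coxeter transformation of the diagram `T₂,₃,ᵣ`:
`χ(T₂,₃,ᵣ)(λ) = λ^{r+3} + λ^{r+2} − (λ³ + λ⁴ + ⋯ + λʳ) + λ + 1`. -/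
def chiT23 (r : ℕ) : Polynomial ℝ :=
  X ^ (r + 3) + X ^ (r + 2) - (∑ i ∈ Finset.Icc 3 r, X ^ i) + X + 1

/-- Key identity: for `r ≥ 2`,
`(y − 1) · χ(T₂,₃,ᵣ)(y) = y^{r+1}(y³ − y − 1) + (y³ + y² − 1)`. -/
lemma chi_key (r : ℕ) (hr : 2 ≤ r) (y : ℝ) :
    (y - 1) * (chiT23 r).eval y = y ^ (r + 1) * (y ^ 3 - y - 1) + (y ^ 3 + y ^ 2 - 1) := by
  have hs : ∑ i ∈ Finset.Icc 3 r, y ^ i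
      = ∑ i ∈ Finset.range (r + 1), y ^ i - ∑ i ∈ Finset.range 3, y ^ i := by
    rw [← Finset.Ico_add_one_right_eq_Icc, Finset.sum_Ico_eq_sub _ (by omega)]
  have h1 := geom_sum_mul y (r + 1)
  have h2 := geom_sum_mul y 3
  simp only [chiT23, eval_add, eval_sub, eval_pow, eval_X, eval_one, eval_finset_sum]
  rw [hs]
  linear_combination h2 - h1

lemma chi_sSup_tendsto (a : ℝ) (h0 : a ^ 3 - a - 1 = 0) (ha1 : 1 < a) :
    Tendsto (fun r : ℕ => sSup {x : ℝ | (chiT23 r).IsRoot x}) atTop (nhds a) := by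
  -- Part 2: convergence of the largest real root.
  -- All real roots of `χ(T₂,₃,ᵣ)` are at most `a` (for `r ≥ 2`).
  have hle : ∀ r : ℕ, 2 ≤ r → ∀ x : ℝ, (chiT23 r).IsRoot x → x ≤ a := by
    intro r hr x hx
    by_contra h
    push_neg at h
    have hx1 : 1 < x := lt_trans ha1 h
    have hq : 0 < x ^ 2 + a * x + a ^ 2 - 1 := by nlinarith
    have hc : 0 < x ^ 3 - x - 1 := by nlinarith [mul_pos (sub_pos.2 h) hq]
    have hd : 0 < x ^ 3 + x ^ 2 - 1 := by nlinarith
    have hkey := chi_key r hr x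
    rw [Polynomial.IsRoot] at hx
    rw [hx, mul_zero] at hkey
    have hpow : 0 < x ^ (r + 1) := by positivity
    nlinarith
  have hbdd : ∀ r : ℕ, 2 ≤ r → BddAbove {x : ℝ | (chiT23 r).IsRoot x} :=
    fun r hr => ⟨a, fun x hx => hle r hr x hx⟩
  -- The value of `χ(T₂,₃,ᵣ)` at `a` is positive.
  have heva : ∀ r : ℕ, 2 ≤ r → 0 < (chiT23 r).eval a := by
    intro r hr
    have hkey := chi_key r hr a
    nlinarith [pow_pos (lt_trans one_pos ha1) (r + 1)]
  -- For any `1 < x < a`, eventually `χ(T₂,₃,ᵣ)` has a root in `(x, a)`.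
  have hroot : ∀ x : ℝ, 1 < x → x < a →
      ∀ᶠ r : ℕ in atTop, ∃ z ∈ Set.Ioo x a, (chiT23 r).IsRoot z := by
    intro x hx1 hxa
    have hq : 0 < x ^ 2 + a * x + a ^ 2 - 1 := by nlinarith
    have hc : 0 < -(x ^ 3 - x - 1) := by nlinarith [mul_pos (sub_pos.2 hxa) hq]
    have htop : Tendsto (fun r : ℕ => x ^ (r + 1)) atTop atTop :=
      (tendsto_pow_atTop_atTop_of_one_lt hx1).comp (tendsto_add_atTop_nat 1)
    filter_upwards [htop.eventually_gt_atTop ((x ^ 3 + x ^ 2 - 1) / (-(x ^ 3 - x - 1))),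
      eventually_ge_atTop 2] with r hM hr
    have hevx : (chiT23 r).eval x < 0 := by
      have hkey := chi_key r hr x
      have h2 : (x ^ 3 + x ^ 2 - 1) < x ^ (r + 1) * (-(x ^ 3 - x - 1)) :=
        (div_lt_iff₀ hc).mp hM
      nlinarith
    have hcont : ContinuousOn (fun y => (chiT23 r).eval y) (Set.Icc x a) :=
      ((chiT23 r).continuous_aeval).continuousOn
    have hiv := intermediate_value_Ioo (le_of_lt hxa) hcont
    have h0mem : (0 : ℝ) ∈ Set.Ioo ((chiT23 r).eval x) ((chiT23 r).eval a) :=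
      ⟨hevx, heva r hr⟩
    obtain ⟨z, hz, hz0⟩ := hiv h0mem
    exact ⟨z, hz, hz0⟩
  rw [tendsto_order]
  constructor
  · intro b hb
    set x := max b ((1 + a) / 2) with hxdef
    have hx1 : 1 < x := lt_of_lt_of_le (by linarith) (le_max_right _ _)
    have hxa : x < a := max_lt hb (by linarith)
    filter_upwards [hroot x hx1 hxa, eventually_ge_atTop 2] with r ⟨z, hz, hz0⟩ hr
    calc b ≤ x := le_max_left _ _
      _ < z := hz.1
      _ ≤ sSup {x : ℝ | (chiT23 r).IsRoot x} := le_csSup (hbdd r hr) hz0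
  · intro b hb
    filter_upwards [hroot ((1 + a) / 2) (by linarith) (by linarith),
      eventually_ge_atTop 2] with r ⟨z, hz, hz0⟩ hr
    have : sSup {x : ℝ | (chiT23 r).IsRoot x} ≤ a :=
      csSup_le ⟨z, hz0⟩ fun y hy => hle r hr y hy
    linarith


/-- The spectral radius (largest real root) of `χ(T₂,₃,ᵣ)` converges, as `r → ∞`, to the
real root of `λ³ − λ − 1 = 0`, namely the plastic number
`∛(1/2 + √(23/108)) + ∛(1/2 − √(23/108)) ≈ 1.324717`. -/
theorem spectralRadius_T23r_tendsto (a : ℝ)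
    (ha : a = ((1 : ℝ) / 2 + Real.sqrt (23 / 108)) ^ ((1 : ℝ) / 3)
            + ((1 : ℝ) / 2 - Real.sqrt (23 / 108)) ^ ((1 : ℝ) / 3)) :
    a ^ 3 - a - 1 = 0 ∧
    Tendsto (fun r : ℕ => sSup {x : ℝ | (chiT23 r).IsRoot x}) atTop (nhds a) := by
  -- Part 1: the explicit `a` satisfies `a³ − a − 1 = 0`, and moreover `a > 1`.
  set s := Real.sqrt (23 / 108) with hsdef
  have hs2 : s ^ 2 = 23 / 108 := Real.sq_sqrt (by norm_num)
  have hs0 : 0 ≤ s := Real.sqrt_nonneg _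
  have hslt : s < 1 / 2 := by nlinarith
  set u := ((1 : ℝ) / 2 + s) ^ ((1 : ℝ) / 3) with hu
  set v := ((1 : ℝ) / 2 - s) ^ ((1 : ℝ) / 3) with hv
  have hup : (0 : ℝ) < 1 / 2 + s := by linarith
  have hvp : (0 : ℝ) < 1 / 2 - s := by linarith
  have hu3 : u ^ 3 = 1 / 2 + s := by
    rw [hu, ← Real.rpow_natCast _ 3, ← Real.rpow_mul hup.le]; norm_num
  have hv3 : v ^ 3 = 1 / 2 - s := by
    rw [hv, ← Real.rpow_natCast _ 3, ← Real.rpow_mul hvp.le]; norm_num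
  have huv : u * v = 1 / 3 := by
    rw [hu, hv, ← Real.mul_rpow hup.le hvp.le]
    have h27 : (1 / 2 + s) * (1 / 2 - s) = (1 / 3 : ℝ) ^ (3 : ℕ) := by nlinarith
    rw [h27, ← Real.rpow_natCast ((1 : ℝ) / 3) 3,
      ← Real.rpow_mul (by norm_num : (0 : ℝ) ≤ 1 / 3)]
    norm_num
  have h0 : a ^ 3 - a - 1 = 0 := by
    rw [ha]; linear_combination hu3 + hv3 + (3 * (u + v)) * huv
  have hapos : 0 < a := by
    rw [ha]
    have h1 := Real.rpow_pos_of_pos hup ((1 : ℝ) / 3)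
    have h2 := Real.rpow_pos_of_pos hvp ((1 : ℝ) / 3)
    positivity
  have ha1 : 1 < a := by
    nlinarith [sq_nonneg a, sq_nonneg (a - 1), mul_pos hapos hapos]
  exact ⟨h0, chi_sSup_tendsto a h0 ha1⟩

end
end

section
/- Splitting along an edge (Subbotin–Sumin formula): if a tree graph Γ is obtained by joining trees Γ₁ and Γ₂ by a single edge between vertex α of Γ₁ and vertex β of Γ₂, then the characteristic polynomials of the Coxeter transformations satisfy X(Γ, λ) = X(Γ₁, λ)·X(Γ₂, λ) − λ·X(Γ₁∖α, λ)·X(Γ₂∖β, λ). -/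
open Polynomial Matrix

noncomputable section
open scoped Classical

/-- The characteristic polynomial `𝒳(Γ, λ) = det(C − λ·I)` of the Coxeter transformation
of the graph with Cartan matrix `K`, in the sign convention of Subbotin–Sumin. -/
def Xchar {V : Type*} [Fintype V] [DecidableEq V] (K : Matrix V V ℚ) (L : List V) :
    Polynomial ℚ :=
  Matrix.det ((coxeterOf ℚ K L).map Polynomial.C - Matrix.scalar V (Polynomial.X : ℚ[X]))

/-- The graph obtained by joining `G₁` and `G₂` by a single edge between the vertex `a`
of `G₁` and the vertex `b` of `G₂`. -/
def joinGraph {V₁ V₂ : Type*} (G₁ : SimpleGraph V₁) (G₂ : SimpleGraph V₂) (a : V₁) (b : V₂) :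
    SimpleGraph (V₁ ⊕ V₂) where
  Adj x y :=
    match x, y with
    | Sum.inl u, Sum.inl v => G₁.Adj u v
    | Sum.inr u, Sum.inr v => G₂.Adj u v
    | Sum.inl u, Sum.inr v => u = a ∧ v = b
    | Sum.inr u, Sum.inl v => v = a ∧ u = b
  symm := by
    constructor
    rintro (u | u) (v | v) h
    · exact G₁.adj_symm h
    · exact h
    · exact h
    · exact G₂.adj_symm h
  loopless := by
    constructor
    rintro (u | u) h
    · exact G₁.irrefl h
    · exact G₂.irrefl h

/-- The graph obtained from `G` by removing the vertex `a`. -/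
def deleteVertex {V : Type*} (G : SimpleGraph V) (a : V) : SimpleGraph {v : V // v ≠ a} :=
  G.comap Subtype.val

namespace SubbotinAux

variable {V : Type*} [Fintype V] [DecidableEq V]

/-- The elementary matrix with a single `1` at position `(v, v)`. -/
def Em (v : V) : Matrix V V ℚ := fun i j => if i = v ∧ j = v then 1 else 0

/-- The "upper-triangular part" (w.r.t. the order given by `l`) of `K`, with unit diagonal. -/
def Pm (K : Matrix V V ℚ) (l : List V) : Matrix V V ℚ :=
  fun i j => if i = j then 1 else
    if i ∈ l ∧ j ∈ l ∧ l.idxOf i < l.idxOf j then K i j else 0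

/-- `K` with all rows outside `l` replaced by zero. -/
def Kres (K : Matrix V V ℚ) (l : List V) : Matrix V V ℚ :=
  fun i j => if i ∈ l then K i j else 0

lemma Em_mul_apply (v : V) (A : Matrix V V ℚ) (i j : V) :
    (Em v * A) i j = if i = v then A v j else 0 := by
  by_cases h : i = v <;> simp [Matrix.mul_apply, Em, h]

lemma mul_Em_apply (v : V) (A : Matrix V V ℚ) (i j : V) :
    (A * Em v) i j = if j = v then A i v else 0 := by
  by_cases h : j = v <;> simp [Matrix.mul_apply, Em, h]

lemma Em_mul_Em (v : V) : Em v * Em v = Em v := by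
  ext i j
  by_cases h : i = v <;> simp [Em_mul_apply, Em, h]

lemma Em_mul_Em_ne {v w : V} (h : w ≠ v) : Em w * Em v = 0 := by
  ext i j
  by_cases hi : i = w <;> simp [Em_mul_apply, Em, hi, h, Ne.symm h]

lemma Em_mul_Kres {v : V} {K : Matrix V V ℚ} {l : List V} (h : v ∉ l) :
    Em v * Kres K l = 0 := by
  ext i j
  by_cases hi : i = v <;> simp [Em_mul_apply, Kres, hi, h]

lemma Em_mul_Pm {v : V} {K : Matrix V V ℚ} {l : List V} (h : v ∉ l) :
    Em v * Pm K l = Em v := by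
  ext i j
  rw [Em_mul_apply]
  by_cases hi : i = v
  · rw [if_pos hi]
    by_cases hj : j = v
    · simp [Pm, Em, hi, hj]
    · have hvj : ¬ v = j := fun hh => hj hh.symm
      simp [Pm, Em, hi, hj, hvj, h]
  · rw [if_neg hi]; simp [Em, hi]

lemma Pm_mul_Em {v : V} {K : Matrix V V ℚ} {l : List V} (h : v ∉ l) :
    Pm K l * Em v = Em v := by
  ext i j
  rw [mul_Em_apply]
  by_cases hj : j = v
  · rw [if_pos hj]
    by_cases hi : i = v
    · simp [Pm, Em, hi, hj]
    · simp [Pm, Em, hi, hj, h]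
  · rw [if_neg hj]; simp [Em, hj]

lemma reflOf_eq (K : Matrix V V ℚ) (v : V) : reflOf ℚ K v = 1 - Em v * K := by
  ext j k
  by_cases h1 : j = k <;> by_cases h2 : j = v <;>
    simp [reflOf, Em_mul_apply, Matrix.one_apply, Matrix.sub_apply, h1, h2]

lemma coxeterOf_append (K : Matrix V V ℚ) (l : List V) (v : V) :
    coxeterOf ℚ K (l ++ [v]) = coxeterOf ℚ K l * reflOf ℚ K v := by
  simp [coxeterOf]

lemma Em_mul_cox {K : Matrix V V ℚ} {l : List V} {w : V} (h : w ∉ l) :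
    Em w * coxeterOf ℚ K l = Em w := by
  induction l using List.reverseRecOn with
  | nil => simp [coxeterOf]
  | append_singleton l v ih =>
      have hw : w ∉ l := fun hh => h (List.mem_append_left _ hh)
      have hwv : w ≠ v := by
        intro hh; exact h (by simp [hh])
      rw [coxeterOf_append, ← mul_assoc, ih hw, reflOf_eq, mul_sub, mul_one,
        ← mul_assoc, Em_mul_Em_ne hwv, zero_mul, sub_zero]

lemma Kres_append {K : Matrix V V ℚ} {l : List V} {v : V} (h : v ∉ l) :
    Kres K (l ++ [v]) = Kres K l + Em v * K := by
  ext i j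
  by_cases hi : i = v <;> by_cases hil : i ∈ l <;>
    simp [Kres, Em_mul_apply, hi, hil, h] at * <;> simp_all

lemma Pm_append {K : Matrix V V ℚ} {l : List V} {v : V} (h : v ∉ l) :
    Pm K (l ++ [v]) = Pm K l + Kres K l * Em v := by
  ext i j
  rw [Matrix.add_apply, mul_Em_apply]
  by_cases hij : i = j
  · by_cases hj : j = v
    · have hi : i = v := hij.trans hj
      simp [Pm, Kres, hij, hj, hi, h]
    · simp [Pm, Kres, hij, hj]
  · simp only [Pm, if_neg hij, Kres]
    have hv3 : (l ++ [v]).idxOf v = l.length := by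
      rw [List.idxOf_append_of_notMem h]; simp
    by_cases hj : j = v
    · by_cases hil : i ∈ l
      · have hiv : i ≠ v := fun hh => h (hh ▸ hil)
        have h2 : (l ++ [v]).idxOf i = l.idxOf i := List.idxOf_append_of_mem hil
        have h4 : l.idxOf i < l.length := List.idxOf_lt_length_iff.2 hil
        have h5 : i ∈ l ++ [v] := List.mem_append_left _ hil
        have h6 : j ∈ l ++ [v] := by simp [hj]
        rw [if_pos ⟨h5, h6, by rw [h2, hj, hv3]; exact h4⟩]
        simp [hj, hil, h]
      · have hiv : i ≠ v := by rw [hj] at hij; exact hij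
        have h5 : i ∉ l ++ [v] := by simp [hil, hiv]
        rw [if_neg (fun hc => h5 hc.1), if_neg (fun hc => hil hc.1), zero_add]
        simp [hil]
    · rw [if_neg hj, add_zero]
      by_cases hjl : j ∈ l
      · have h2 : (l ++ [v]).idxOf j = l.idxOf j := List.idxOf_append_of_mem hjl
        have h6 : j ∈ l ++ [v] := List.mem_append_left _ hjl
        by_cases hil : i ∈ l
        · have h3 : (l ++ [v]).idxOf i = l.idxOf i := List.idxOf_append_of_mem hil
          have h5 : i ∈ l ++ [v] := List.mem_append_left _ hil
          have hiff : (i ∈ l ++ [v] ∧ j ∈ l ++ [v] ∧ (l ++ [v]).idxOf i < (l ++ [v]).idxOf j)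
              ↔ (i ∈ l ∧ j ∈ l ∧ l.idxOf i < l.idxOf j) := by
            rw [h2, h3]
            exact ⟨fun hc => ⟨hil, hjl, hc.2.2⟩, fun hc => ⟨h5, h6, hc.2.2⟩⟩
          simp only [hiff]
        · by_cases hiv : i = v
          · have hlt : ¬((l ++ [v]).idxOf i < (l ++ [v]).idxOf j) := by
              rw [hiv, hv3, h2]
              have h4 := List.idxOf_lt_length_iff.2 hjl
              omega
            rw [if_neg (fun hc => hlt hc.2.2), if_neg (fun hc => hil hc.1)]
          · have h5 : i ∉ l ++ [v] := by simp [hil, hiv]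
            rw [if_neg (fun hc => h5 hc.1), if_neg (fun hc => hil hc.1)]
      · have h6 : j ∉ l ++ [v] := by simp [hjl, hj]
        rw [if_neg (fun hc => h6 hc.2.1), if_neg (fun hc => hjl hc.2.1)]

lemma key {K : Matrix V V ℚ} {l : List V} (h : l.Nodup) :
    Pm K l * coxeterOf ℚ K l = Pm K l - Kres K l := by
  induction l using List.reverseRecOn with
  | nil =>
      have h1 : Pm K ([] : List V) = 1 := by
        ext i j; simp [Pm, Matrix.one_apply]
      have h2 : Kres K ([] : List V) = 0 := by
        ext i j; simp [Kres]
      simp [coxeterOf, h1, h2]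
  | append_singleton l v ih =>
      rw [List.nodup_append] at h
      obtain ⟨hl, -, hd⟩ := h
      have hv : v ∉ l := fun hh => hd v hh v (List.mem_singleton_self v) rfl
      have IH := ih hl
      set P := Pm K l
      set Kt := Kres K l
      set F := coxeterOf ℚ K l
      set E := Em v
      rw [coxeterOf_append, Pm_append hv, Kres_append hv, reflOf_eq]
      have hEF : E * F = E := Em_mul_cox hv
      have hPE : P * E = E := Pm_mul_Em hv
      have hEE : E * E = E := Em_mul_Em v
      have step1 : (P + Kt * E) * (F * (1 - E * K))
          = (P * F) * (1 - E * K) + Kt * (E * F) * (1 - E * K) := by noncomm_ring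
      rw [step1, IH, hEF]
      have step2 : (P - Kt) * (1 - E * K) + Kt * E * (1 - E * K)
          = P - Kt + Kt * E - (P * E) * K + (Kt * E) * K - Kt * (E * E) * K := by
        noncomm_ring
      rw [step2, hPE, hEE]
      noncomm_ring

lemma det_Pm {K : Matrix V V ℚ} {L : List V} (hL : IsEnum L) : (Pm K L).det = 1 := by
  classical
  have hinj : Function.Injective L.get := List.nodup_iff_injective_get.1 hL.1
  have hsurj : Function.Surjective L.get := by
    intro v
    obtain ⟨i, hi⟩ := List.mem_iff_get.1 (hL.2 v)
    exact ⟨i, hi⟩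
  let e : Fin L.length ≃ V := Equiv.ofBijective _ ⟨hinj, hsurj⟩
  rw [← Matrix.det_submatrix_equiv_self e]
  have htri : ((Pm K L).submatrix e e).BlockTriangular id := by
    intro i j hji
    have hne : e i ≠ e j := fun hh => (ne_of_gt hji) (hinj hh)
    have hidx : ∀ i : Fin L.length, L.idxOf (e i) = (i : ℕ) := by
      intro i
      have h1 : L.idxOf (L.get i) < L.length :=
        List.idxOf_lt_length_iff.2 (List.get_mem _ _)
      have := List.idxOf_get (a := L.get i) (l := L) h1
      have h2 : L.get ⟨L.idxOf (L.get i), h1⟩ = L.get i := this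
      have := hinj h2
      simpa [e, Equiv.ofBijective] using congrArg Fin.val this
    have : ¬ (L.idxOf (e i) < L.idxOf (e j)) := by
      rw [hidx i, hidx j]
      simpa using le_of_lt hji
    simp [Matrix.submatrix_apply, Pm, hne, this]
  rw [Matrix.det_of_upperTriangular htri]
  apply Finset.prod_eq_one
  intro i _
  simp [Matrix.submatrix_apply, Pm]

/-- The order-twisted adjacency-type matrix whose determinant computes `Xchar`. -/
def Nmat (G : SimpleGraph V) (r : V → ℕ) : Matrix V V ℚ[X] :=
  fun i j => if i = j then -(1 + Polynomial.X) else
    if G.Adj i j then (if r i < r j then Polynomial.X else 1) else 0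

lemma Xchar_eq_det_Nmat (G : SimpleGraph V) (L : List V) (hL : IsEnum L) :
    Xchar (cartanOf ℚ G) L = (Nmat G (fun v => L.idxOf v)).det := by
  classical
  set K := cartanOf ℚ G
  set P := Pm K L
  have h1 : P * coxeterOf ℚ K L = P - Kres K L := key hL.1
  have hdetP : P.det = 1 := det_Pm hL
  have hdetPc : (P.map (Polynomial.C : ℚ → ℚ[X])).det = 1 := by
    have : P.map (Polynomial.C : ℚ → ℚ[X])
        = (Polynomial.C : ℚ →+* ℚ[X]).mapMatrix P := rfl
    rw [this, ← RingHom.map_det, hdetP]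
    simp
  have hmain : (P.map (Polynomial.C : ℚ → ℚ[X]))
      * ((coxeterOf ℚ K L).map Polynomial.C - Matrix.scalar V (Polynomial.X : ℚ[X]))
      = Nmat G (fun v => L.idxOf v) := by
    rw [mul_sub]
    have hmm : (P.map (Polynomial.C : ℚ → ℚ[X]))
        * ((coxeterOf ℚ K L).map Polynomial.C)
        = (P - Kres K L).map (Polynomial.C : ℚ → ℚ[X]) := by
      rw [← Matrix.map_mul, h1]
    rw [hmm]
    refine Matrix.ext fun i j => ?_
    have hPsc : ((P.map (Polynomial.C : ℚ → ℚ[X])) * Matrix.scalar V (Polynomial.X : ℚ[X])) i j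
        = Polynomial.C (P i j) * Polynomial.X := by
      rw [Matrix.scalar_apply, Matrix.mul_diagonal]
      simp [Matrix.map_apply]
    rw [Matrix.sub_apply, hPsc]
    simp only [Matrix.map_apply, Matrix.sub_apply]
    by_cases hij : i = j
    · subst hij
      have h2 : K i i = 2 := by simp [K, cartanOf]
      simp [P, Pm, Kres, h2, hL.2 i, Nmat, map_sub, _root_.map_one, map_ofNat]
      ring
    · have hKij : K i j = if G.Adj i j then -1 else 0 := by simp [K, cartanOf, hij]
      by_cases hadj : G.Adj i j
      · by_cases hlt : L.idxOf i < L.idxOf j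
        · simp [P, Pm, Kres, Nmat, hij, hadj, hlt, hL.2 i, hL.2 j, hKij,
            map_sub, _root_.map_one, map_neg]
        · simp [P, Pm, Kres, Nmat, hij, hadj, hlt, hL.2 i, hL.2 j, hKij,
            map_sub, _root_.map_one, map_neg]
      · simp [P, Pm, Kres, Nmat, hij, hadj, hKij, hL.2 i]
  calc Xchar K L
      = 1 * ((coxeterOf ℚ K L).map Polynomial.C
          - Matrix.scalar V (Polynomial.X : ℚ[X])).det := by rw [one_mul]; rfl
    _ = (P.map (Polynomial.C : ℚ → ℚ[X])).det
          * ((coxeterOf ℚ K L).map Polynomial.C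
            - Matrix.scalar V (Polynomial.X : ℚ[X])).det := by rw [hdetPc]
    _ = ((P.map (Polynomial.C : ℚ → ℚ[X]))
          * ((coxeterOf ℚ K L).map Polynomial.C
            - Matrix.scalar V (Polynomial.X : ℚ[X]))).det := (Matrix.det_mul _ _).symm
    _ = (Nmat G (fun v => L.idxOf v)).det := by rw [hmain]

section Split

variable {R : Type*} [CommRing R]

/-- The principal minor of `A` obtained by deleting row and column `a`. -/
def toMinor {W : Type*} (A : Matrix W W R) (a : W) :
    Matrix {x : W // x ≠ a} {x : W // x ≠ a} R :=
  A.submatrix Subtype.val Subtype.val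

lemma det_updateColumn_single {W : Type*} [Fintype W] [DecidableEq W]
    (A : Matrix W W R) (a : W) :
    (A.updateCol a (Pi.single a 1)).det = (toMinor A a).det := by
  classical
  let e : ({x : W // x ≠ a} ⊕ Unit) ≃ W :=
    { toFun := Sum.elim Subtype.val fun _ => a
      invFun := fun x => if h : x = a then Sum.inr () else Sum.inl ⟨x, h⟩
      left_inv := by
        rintro (⟨x, hx⟩ | ⟨⟩)
        · simp [hx]
        · simp
      right_inv := fun x => by by_cases h : x = a <;> simp [h] }
  rw [← Matrix.det_submatrix_equiv_self e]
  have hb : (A.updateCol a (Pi.single a 1)).submatrix e e =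
      Matrix.fromBlocks (toMinor A a) 0 (Matrix.of fun _ x => A a x.val) 1 := by
    refine Matrix.ext ?_
    rintro (i | i) (j | j)
    · simp [e, toMinor, Matrix.updateCol_apply, Pi.single_apply, j.prop]
    · simp [e, toMinor, Matrix.updateCol_apply, Pi.single_apply, i.prop]
    · simp [e, toMinor, Matrix.updateCol_apply, Pi.single_apply, j.prop]
    · simp [e, Matrix.updateCol_apply, Pi.single_apply, Matrix.one_apply]
  rw [hb, Matrix.det_fromBlocks_zero₁₂, Matrix.det_one, mul_one]

lemma det_split {α β : Type*} [Fintype α] [Fintype β] [DecidableEq α] [DecidableEq β]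
    (M : Matrix (α ⊕ β) (α ⊕ β) R) (a : α) (b : β)
    (h1 : ∀ i j, ¬(i = a ∧ j = b) → M (Sum.inl i) (Sum.inr j) = 0)
    (h2 : ∀ j i, ¬(j = b ∧ i = a) → M (Sum.inr j) (Sum.inl i) = 0) :
    M.det = (M.toBlocks₁₁).det * (M.toBlocks₂₂).det
      - M (Sum.inl a) (Sum.inr b) * M (Sum.inr b) (Sum.inl a)
        * ((toMinor M.toBlocks₁₁ a).det * (toMinor M.toBlocks₂₂ b).det) := by
  classical
  set w := M (Sum.inl a) (Sum.inr b) with hw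
  set x := M (Sum.inr b) (Sum.inl a) with hx
  set c₀ : (α ⊕ β) → R := fun i => if i = Sum.inl a then 0 else M i (Sum.inr b) with hc₀
  set s1 : (α ⊕ β) → R := Pi.single (Sum.inl a) 1 with hs1
  set s2 : (α ⊕ β) → R := Pi.single (Sum.inr b) 1 with hs2
  have hcol : (fun i => M i (Sum.inr b)) = c₀ + w • s1 := by
    funext i
    by_cases hi : i = Sum.inl a <;>
      simp [hc₀, hi, hs1, Pi.single_apply, hw]
  set M₂ := M.updateCol (Sum.inr b) s1 with hM₂
  have step1 : M.det = (M.updateCol (Sum.inr b) c₀).det + w * M₂.det := by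
    conv_lhs => rw [← Matrix.updateCol_eq_self M (Sum.inr b)]
    rw [show (fun i => M i (Sum.inr b)) = c₀ + w • s1 from hcol,
      Matrix.det_updateCol_add, Matrix.det_updateCol_smul]
  have step2 : (M.updateCol (Sum.inr b) c₀).det
      = (M.toBlocks₁₁).det * (M.toBlocks₂₂).det := by
    have hblk : M.updateCol (Sum.inr b) c₀
        = Matrix.fromBlocks M.toBlocks₁₁ 0 M.toBlocks₂₁ M.toBlocks₂₂ := by
      refine Matrix.ext ?_
      rintro (i | i) (j | j)
      · simp [Matrix.updateCol_apply, Matrix.toBlocks₁₁]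
      · by_cases hj : j = b
        · by_cases hi : i = a
          · simp [Matrix.updateCol_apply, hj, hc₀, hi]
          · have h0 : M (Sum.inl i) (Sum.inr b) = 0 := h1 i b (fun hc => hi hc.1)
            simp [Matrix.updateCol_apply, hj, hc₀, hi, h0]
        · have h0 : M (Sum.inl i) (Sum.inr j) = 0 := h1 i j (fun hc => hj hc.2)
          simp [Matrix.updateCol_apply, hj, h0]
      · simp [Matrix.updateCol_apply, Matrix.toBlocks₂₁]
      · by_cases hj : j = b <;>
          simp [Matrix.updateCol_apply, hc₀, hj, Matrix.toBlocks₂₂]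
    rw [hblk, Matrix.det_fromBlocks_zero₁₂]
  -- expand the column `inl a` of `M₂`
  set d₀ : (α ⊕ β) → R := fun i => if i = Sum.inr b then 0 else M i (Sum.inl a) with hd₀
  have hM₂col : (fun i => M₂ i (Sum.inl a)) = d₀ + x • s2 := by
    funext i
    have : M₂ i (Sum.inl a) = M i (Sum.inl a) := by
      rw [hM₂, Matrix.updateCol_ne (by simp : (Sum.inl a : α ⊕ β) ≠ Sum.inr b)]
    rw [this]
    by_cases hi : i = Sum.inr b <;> simp [hd₀, hi, hs2, Pi.single_apply, hx]
  set M₄ := M₂.updateCol (Sum.inl a) s2 with hM₄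
  have step3 : M₂.det = (M₂.updateCol (Sum.inl a) d₀).det + x * M₄.det := by
    conv_lhs => rw [← Matrix.updateCol_eq_self M₂ (Sum.inl a)]
    rw [show (fun i => M₂ i (Sum.inl a)) = d₀ + x • s2 from hM₂col,
      Matrix.det_updateCol_add, Matrix.det_updateCol_smul]
  have step4 : (M₂.updateCol (Sum.inl a) d₀).det = 0 := by
    set T := M₂.updateCol (Sum.inl a) d₀ with hT
    have hblk : T = Matrix.fromBlocks T.toBlocks₁₁ T.toBlocks₁₂ 0 T.toBlocks₂₂ := by
      refine Matrix.ext ?_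
      rintro (i | i) (j | j)
      · rfl
      · rfl
      · show T (Sum.inr i) (Sum.inl j) = 0
        by_cases hj : j = a
        · by_cases hi : i = b
          · simp [hT, Matrix.updateCol_apply, hj, hd₀, hi]
          · have h0 : M (Sum.inr i) (Sum.inl a) = 0 := h2 i a (fun hc => hi hc.1)
            have h5 : M₂ (Sum.inr i) (Sum.inl a) = 0 := by
              rw [hM₂, Matrix.updateCol_ne (by simp : (Sum.inl a : α ⊕ β) ≠ Sum.inr b), h0]
            simp [hT, Matrix.updateCol_apply, hj, hd₀, hi, h5, h0]
        · have h0 : M (Sum.inr i) (Sum.inl j) = 0 := h2 i j (fun hc => hj hc.2)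
          have h5 : M₂ (Sum.inr i) (Sum.inl j) = 0 := by
            rw [hM₂, Matrix.updateCol_ne (by simp : (Sum.inl j : α ⊕ β) ≠ Sum.inr b), h0]
          simp [hT, Matrix.updateCol_apply, hj, h5]
      · rfl
    have hcolzero : ∀ i, T.toBlocks₂₂ i b = 0 := by
      intro i
      have : T (Sum.inr i) (Sum.inr b) = M₂ (Sum.inr i) (Sum.inr b) := by
        rw [hT, Matrix.updateCol_ne (by simp : (Sum.inr b : α ⊕ β) ≠ Sum.inl a)]
      have h5 : M₂ (Sum.inr i) (Sum.inr b) = 0 := by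
        rw [hM₂, Matrix.updateCol_self]
        simp [hs1, Pi.single_apply]
      rw [Matrix.toBlocks₂₂]; simp only [Matrix.of_apply]
      rw [this, h5]
    rw [hblk, Matrix.det_fromBlocks_zero₂₁]
    rw [Matrix.det_eq_zero_of_column_eq_zero b hcolzero, mul_zero]
  have step5 : M₄.det
      = -((toMinor M.toBlocks₁₁ a).det * (toMinor M.toBlocks₂₂ b).det) := by
    set σ : Equiv.Perm (α ⊕ β) := Equiv.swap (Sum.inl a) (Sum.inr b) with hσ
    have hblk : M₄.submatrix id σ
        = Matrix.fromBlocks (M.toBlocks₁₁.updateCol a (Pi.single a 1)) 0 0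
            (M.toBlocks₂₂.updateCol b (Pi.single b 1)) := by
      refine Matrix.ext ?_
      have hMcol : ∀ i, M₄ i (Sum.inr b) = s1 i := by
        intro i
        rw [hM₄, Matrix.updateCol_ne (by simp : (Sum.inr b : α ⊕ β) ≠ Sum.inl a), hM₂,
          Matrix.updateCol_self]
      have hMcola : ∀ i, M₄ i (Sum.inl a) = s2 i := by
        intro i; rw [hM₄, Matrix.updateCol_self]
      have hMother : ∀ i j, j ≠ Sum.inl a → j ≠ Sum.inr b → M₄ i j = M i j := by
        intro i j hja hjb
        rw [hM₄, Matrix.updateCol_ne hja, hM₂, Matrix.updateCol_ne hjb]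
      rintro (i | i) (j | j)
      · by_cases hj : j = a
        · have hσ1 : σ (Sum.inl j) = Sum.inr b := by rw [hj]; exact Equiv.swap_apply_left _ _
          simp only [Matrix.submatrix_apply, id_eq, hσ1, hMcol, hs1]
          simp [Matrix.updateCol_apply, hj, Pi.single_apply]
        · have hσj : σ (Sum.inl j) = Sum.inl j := by
            rw [hσ]; apply Equiv.swap_apply_of_ne_of_ne <;> simp [hj]
          simp only [Matrix.submatrix_apply, id_eq, hσj]
          rw [hMother _ _ (by simp [hj]) (by simp)]
          simp [Matrix.updateCol_apply, hj, Matrix.toBlocks₁₁]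
      · by_cases hj : j = b
        · have hσ1 : σ (Sum.inr j) = Sum.inl a := by rw [hj]; exact Equiv.swap_apply_right _ _
          simp only [Matrix.submatrix_apply, id_eq, hσ1, hMcola, hs2]
          simp [Pi.single_apply]
        · have hσj : σ (Sum.inr j) = Sum.inr j := by
            rw [hσ]; apply Equiv.swap_apply_of_ne_of_ne <;> simp [hj]
          simp only [Matrix.submatrix_apply, id_eq, hσj]
          rw [hMother _ _ (by simp) (by simp [hj])]
          simp [h1 i j (fun hc => hj hc.2)]
      · by_cases hj : j = a
        · have hσ1 : σ (Sum.inl j) = Sum.inr b := by rw [hj]; exact Equiv.swap_apply_left _ _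
          simp only [Matrix.submatrix_apply, id_eq, hσ1, hMcol, hs1]
          simp [Pi.single_apply]
        · have hσj : σ (Sum.inl j) = Sum.inl j := by
            rw [hσ]; apply Equiv.swap_apply_of_ne_of_ne <;> simp [hj]
          simp only [Matrix.submatrix_apply, id_eq, hσj]
          rw [hMother _ _ (by simp [hj]) (by simp)]
          simp [h2 i j (fun hc => hj hc.2)]
      · by_cases hj : j = b
        · have hσ1 : σ (Sum.inr j) = Sum.inl a := by rw [hj]; exact Equiv.swap_apply_right _ _
          simp only [Matrix.submatrix_apply, id_eq, hσ1, hMcola, hs2]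
          simp [Pi.single_apply, Matrix.updateCol_apply, hj, Matrix.toBlocks₂₂]
        · have hσj : σ (Sum.inr j) = Sum.inr j := by
            rw [hσ]; apply Equiv.swap_apply_of_ne_of_ne <;> simp [hj]
          simp only [Matrix.submatrix_apply, id_eq, hσj]
          rw [hMother _ _ (by simp) (by simp [hj])]
          simp [Matrix.updateCol_apply, hj, Matrix.toBlocks₂₂]
    have hsign : Equiv.Perm.sign σ = -1 := Equiv.Perm.sign_swap (by simp)
    have h7 : (M₄.submatrix id σ).det = -M₄.det := by
      rw [Matrix.det_permute', hsign]
      simp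
    have h6 : Matrix.det (Matrix.fromBlocks (M.toBlocks₁₁.updateCol a (Pi.single a 1)) 0 0
        (M.toBlocks₂₂.updateCol b (Pi.single b 1)))
        = (toMinor M.toBlocks₁₁ a).det * (toMinor M.toBlocks₂₂ b).det := by
      rw [Matrix.det_fromBlocks_zero₁₂, det_updateColumn_single, det_updateColumn_single]
    rw [hblk, h6] at h7
    linear_combination h7
  rw [step1, step2, step3, step4, step5]
  ring

end Split

lemma comap_isAcyclic {V W : Type*} (G : SimpleGraph V) (hG : G.IsAcyclic)
    (f : W → V) (hf : Function.Injective f) : (G.comap f).IsAcyclic := by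
  intro v c hc
  exact hG (c.map (SimpleGraph.Hom.comap f G)) (hc.map hf)

lemma Nmat_comap {V : Type*} [Fintype V] [DecidableEq V] (G : SimpleGraph V) (r : V → ℕ)
    (p : V → Prop) :
    Nmat (G.comap (Subtype.val : {x // p x} → V)) (fun x => r x.val)
      = (Nmat G r).submatrix Subtype.val Subtype.val := by
  refine Matrix.ext fun i j => ?_
  by_cases hij : i = j
  · simp [Nmat, hij]
  · have hne : (i : V) ≠ j := fun hh => hij (Subtype.ext hh)
    simp [Nmat, hij, hne, SimpleGraph.comap_adj]

lemma det_Nmat_indep : ∀ (n : ℕ) {V : Type} [Fintype V] [DecidableEq V],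
    Fintype.card V = n → ∀ (G : SimpleGraph V), G.IsAcyclic →
    ∀ (r s : V → ℕ), Function.Injective r → Function.Injective s →
    (Nmat G r).det = (Nmat G s).det := by
  intro n
  induction n using Nat.strong_induction_on with
  | _ n ih =>
    intro V _ _ hcard G hG r s hr hs
    by_cases hE : ∃ a b, G.Adj a b
    · obtain ⟨a, b, hab⟩ := hE
      have hbridge := (SimpleGraph.isAcyclic_iff_forall_adj_isBridge.mp hG) hab
      rw [SimpleGraph.isBridge_iff] at hbridge
      set p : V → Prop := fun v => (G \ SimpleGraph.fromEdgeSet {s(a, b)}).Reachable a v with hp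
      have hpa : p a := SimpleGraph.Reachable.refl a
      have hpb : ¬ p b := hbridge
      have hstep : ∀ u v, G.Adj u v → ¬(u = a ∧ v = b) → ¬(u = b ∧ v = a) → (p u ↔ p v) := by
        intro u v huv hn1 hn2
        have hne : ¬ s(u, v) = s(a, b) := by
          rw [Sym2.eq_iff]; tauto
        have hadj' : (G \ SimpleGraph.fromEdgeSet {s(a, b)}).Adj u v := by
          rw [SimpleGraph.sdiff_adj]
          refine ⟨huv, ?_⟩
          rw [SimpleGraph.fromEdgeSet_adj]
          rintro ⟨hmem, -⟩
          exact hne (by simpa using hmem)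
        exact ⟨fun hu => hu.trans hadj'.reachable,
               fun hv => hv.trans hadj'.symm.reachable⟩
      have hzero : ∀ (r' : V → ℕ) (i j : V), p i → ¬ p j → ¬(i = a ∧ j = b) →
          Nmat G r' i j = 0 := by
        intro r' i j hi hj hne
        have hij : i ≠ j := fun hh => hj (hh ▸ hi)
        by_cases hadj : G.Adj i j
        · exfalso
          by_cases hba : i = b ∧ j = a
          · exact hpb (hba.1 ▸ hi)
          · exact hj ((hstep i j hadj hne hba).mp hi)
        · simp [Nmat, hij, hadj]
      have hzero' : ∀ (r' : V → ℕ) (i j : V), ¬ p i → p j → ¬(i = b ∧ j = a) →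
          Nmat G r' i j = 0 := by
        intro r' i j hi hj hne
        have hij : i ≠ j := fun hh => hi (hh ▸ hj)
        by_cases hadj : G.Adj i j
        · exfalso
          by_cases hba : i = a ∧ j = b
          · exact hi (hba.1 ▸ hpa)
          · exact hi ((hstep i j hadj hba hne).mpr hj)
        · simp [Nmat, hij, hadj]
      set e : {x // p x} ⊕ {x // ¬ p x} ≃ V := Equiv.sumCompl p with he
      have hdet : ∀ (r' : V → ℕ), Function.Injective r' → (Nmat G r').det =
          (Nmat (G.comap (Subtype.val : {x // p x} → V)) (fun x => r' x.val)).det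
          * (Nmat (G.comap (Subtype.val : {x // ¬ p x} → V)) (fun x => r' x.val)).det
          - Polynomial.X *
            ((toMinor (Nmat (G.comap (Subtype.val : {x // p x} → V))
                (fun x => r' x.val)) ⟨a, hpa⟩).det
             * (toMinor (Nmat (G.comap (Subtype.val : {x // ¬ p x} → V))
                (fun x => r' x.val)) ⟨b, hpb⟩).det) := by
        intro r' hr'
        have hsub : (Nmat G r').det = ((Nmat G r').submatrix e e).det :=
          (Matrix.det_submatrix_equiv_self e _).symm
        set M := (Nmat G r').submatrix e e with hM
        have happ1 : ∀ (i : {x // p x}) (j : {x // ¬ p x}),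
            M (Sum.inl i) (Sum.inr j) = Nmat G r' i.val j.val := by
          intro i j; simp [hM, he]
        have happ2 : ∀ (j : {x // ¬ p x}) (i : {x // p x}),
            M (Sum.inr j) (Sum.inl i) = Nmat G r' j.val i.val := by
          intro j i; simp [hM, he]
        have hsplit := det_split M ⟨a, hpa⟩ ⟨b, hpb⟩
          (by
            intro i j hne
            rw [happ1]
            refine hzero r' _ _ i.prop j.prop ?_
            rintro ⟨hc1, hc2⟩
            exact hne ⟨Subtype.ext hc1, Subtype.ext hc2⟩)
          (by
            intro j i hne
            rw [happ2]
            refine hzero' r' _ _ j.prop i.prop ?_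
            rintro ⟨hc1, hc2⟩
            exact hne ⟨Subtype.ext hc1, Subtype.ext hc2⟩)
        have hb11 : M.toBlocks₁₁
            = Nmat (G.comap (Subtype.val : {x // p x} → V)) (fun x => r' x.val) := by
          rw [Nmat_comap]
          refine Matrix.ext fun i j => ?_
          simp [hM, Matrix.toBlocks₁₁, he]
        have hb22 : M.toBlocks₂₂
            = Nmat (G.comap (Subtype.val : {x // ¬ p x} → V)) (fun x => r' x.val) := by
          rw [Nmat_comap]
          refine Matrix.ext fun i j => ?_
          simp [hM, Matrix.toBlocks₂₂, he]
        have hX : M (Sum.inl ⟨a, hpa⟩) (Sum.inr ⟨b, hpb⟩)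
            * M (Sum.inr ⟨b, hpb⟩) (Sum.inl ⟨a, hpa⟩) = Polynomial.X := by
          rw [happ1, happ2]
          have h1 : Nmat G r' a b = if r' a < r' b then Polynomial.X else 1 := by
            simp [Nmat, hab.ne, hab]
          have h2 : Nmat G r' b a = if r' b < r' a then Polynomial.X else 1 := by
            simp [Nmat, hab.ne', hab.symm]
          have hner : r' a ≠ r' b := fun hh => hab.ne (hr' hh)
          rcases lt_or_gt_of_ne hner with h | h
          · rw [h1, h2, if_pos h, if_neg (not_lt.mpr (le_of_lt h)), mul_one]
          · rw [h1, h2, if_neg (not_lt.mpr (le_of_lt h)), if_pos h, one_mul]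
        rw [hsub, hsplit, hb11, hb22]
        rw [show M (Sum.inl ⟨a, hpa⟩) (Sum.inr ⟨b, hpb⟩)
            * M (Sum.inr ⟨b, hpb⟩) (Sum.inl ⟨a, hpa⟩) = Polynomial.X from hX]
      rw [hdet r hr, hdet s hs]
      -- cardinalities
      have hcards : Fintype.card {x // p x} + Fintype.card {x // ¬ p x} = n := by
        rw [← hcard, ← Fintype.card_congr e, Fintype.card_sum]
      have hpos1 : 0 < Fintype.card {x // p x} := Fintype.card_pos_iff.mpr ⟨⟨a, hpa⟩⟩
      have hpos2 : 0 < Fintype.card {x // ¬ p x} := Fintype.card_pos_iff.mpr ⟨⟨b, hpb⟩⟩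
      have hc1 : Fintype.card {x // p x} < n := by omega
      have hc2 : Fintype.card {x // ¬ p x} < n := by omega
      have hacy1 : (G.comap (Subtype.val : {x // p x} → V)).IsAcyclic :=
        comap_isAcyclic G hG _ Subtype.val_injective
      have hacy2 : (G.comap (Subtype.val : {x // ¬ p x} → V)).IsAcyclic :=
        comap_isAcyclic G hG _ Subtype.val_injective
      have hrinj1 : Function.Injective (fun (x : {x // p x}) => r x.val) :=
        fun _ _ hh => Subtype.ext (hr hh)
      have hsinj1 : Function.Injective (fun (x : {x // p x}) => s x.val) :=
        fun _ _ hh => Subtype.ext (hs hh)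
      have hrinj2 : Function.Injective (fun (x : {x // ¬ p x}) => r x.val) :=
        fun _ _ hh => Subtype.ext (hr hh)
      have hsinj2 : Function.Injective (fun (x : {x // ¬ p x}) => s x.val) :=
        fun _ _ hh => Subtype.ext (hs hh)
      have e1 := ih _ hc1 rfl _ hacy1 _ _ hrinj1 hsinj1
      have e2 := ih _ hc2 rfl _ hacy2 _ _ hrinj2 hsinj2
      -- minors
      have hm1 : ∀ (r' : V → ℕ),
          toMinor (Nmat (G.comap (Subtype.val : {x // p x} → V))
            (fun x => r' x.val)) ⟨a, hpa⟩
          = Nmat ((G.comap (Subtype.val : {x // p x} → V)).comap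
              (Subtype.val : {y // y ≠ (⟨a, hpa⟩ : {x // p x})} → {x // p x}))
              (fun y => r' y.val.val) := by
        intro r'
        rw [Nmat_comap (G.comap (Subtype.val : {x // p x} → V)) (fun x => r' x.val)
          (fun y => y ≠ (⟨a, hpa⟩ : {x // p x}))]
        rfl
      have hm2 : ∀ (r' : V → ℕ),
          toMinor (Nmat (G.comap (Subtype.val : {x // ¬ p x} → V))
            (fun x => r' x.val)) ⟨b, hpb⟩
          = Nmat ((G.comap (Subtype.val : {x // ¬ p x} → V)).comap
              (Subtype.val : {y // y ≠ (⟨b, hpb⟩ : {x // ¬ p x})} → {x // ¬ p x}))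
              (fun y => r' y.val.val) := by
        intro r'
        rw [Nmat_comap (G.comap (Subtype.val : {x // ¬ p x} → V)) (fun x => r' x.val)
          (fun y => y ≠ (⟨b, hpb⟩ : {x // ¬ p x}))]
        rfl
      have hcm1 : Fintype.card {y // y ≠ (⟨a, hpa⟩ : {x // p x})} < n :=
        lt_of_le_of_lt (Fintype.card_subtype_le _) hc1
      have hcm2 : Fintype.card {y // y ≠ (⟨b, hpb⟩ : {x // ¬ p x})} < n :=
        lt_of_le_of_lt (Fintype.card_subtype_le _) hc2
      have e3 := ih _ hcm1 rfl _
        (comap_isAcyclic _ hacy1 _ Subtype.val_injective)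
        (fun (y : {y // y ≠ (⟨a, hpa⟩ : {x // p x})}) => r y.val.val)
        (fun y => s y.val.val)
        (fun _ _ hh => Subtype.ext (Subtype.ext (hr hh)))
        (fun _ _ hh => Subtype.ext (Subtype.ext (hs hh)))
      have e4 := ih _ hcm2 rfl _
        (comap_isAcyclic _ hacy2 _ Subtype.val_injective)
        (fun (y : {y // y ≠ (⟨b, hpb⟩ : {x // ¬ p x})}) => r y.val.val)
        (fun y => s y.val.val)
        (fun _ _ hh => Subtype.ext (Subtype.ext (hr hh)))
        (fun _ _ hh => Subtype.ext (Subtype.ext (hs hh)))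
      rw [e1, e2, hm1 r, hm2 r, hm1 s, hm2 s, e3, e4]
    · push_neg at hE
      have : Nmat G r = Nmat G s := by
        refine Matrix.ext fun i j => ?_
        by_cases hij : i = j
        · simp [Nmat, hij]
        · simp [Nmat, hij, hE i j]
      rw [this]

end SubbotinAux

/-- **Subbotin–Sumin splitting-along-an-edge formula.** If a tree `Γ` is obtained by
joining trees `Γ₁` and `Γ₂` by a single edge between the vertex `α` of `Γ₁` and the
vertex `β` of `Γ₂`, then the characteristic polynomials of the Coxeter transformations
satisfy `𝒳(Γ, λ) = 𝒳(Γ₁, λ)·𝒳(Γ₂, λ) − λ·𝒳(Γ₁∖α, λ)·𝒳(Γ₂∖β, λ)`. -/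
theorem subbotin_sumin_splitting (m k : ℕ)
    (G₁ : SimpleGraph (Fin m)) (G₂ : SimpleGraph (Fin k))
    (hG₁ : G₁.IsTree) (hG₂ : G₂.IsTree) (a : Fin m) (b : Fin k)
    (L : List (Fin m ⊕ Fin k)) (hL : IsEnum L)
    (L₁ : List (Fin m)) (hL₁ : IsEnum L₁) (L₂ : List (Fin k)) (hL₂ : IsEnum L₂)
    (L₁' : List {v : Fin m // v ≠ a}) (hL₁' : IsEnum L₁')
    (L₂' : List {v : Fin k // v ≠ b}) (hL₂' : IsEnum L₂') :
    Xchar (cartanOf ℚ (joinGraph G₁ G₂ a b)) L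
      = Xchar (cartanOf ℚ G₁) L₁ * Xchar (cartanOf ℚ G₂) L₂
        - Polynomial.X * (Xchar (cartanOf ℚ (deleteVertex G₁ a)) L₁'
            * Xchar (cartanOf ℚ (deleteVertex G₂ b)) L₂') := by
  classical
  have hinj : ∀ {W : Type} [DecidableEq W] (L' : List W), IsEnum L' →
      Function.Injective (fun v => L'.idxOf v) := by
    intro W _ L' hL' i j hh
    exact (List.idxOf_inj (hL'.2 i)).mp hh
  rw [SubbotinAux.Xchar_eq_det_Nmat _ L hL, SubbotinAux.Xchar_eq_det_Nmat _ L₁ hL₁,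
    SubbotinAux.Xchar_eq_det_Nmat _ L₂ hL₂, SubbotinAux.Xchar_eq_det_Nmat _ L₁' hL₁',
    SubbotinAux.Xchar_eq_det_Nmat _ L₂' hL₂']
  set Γ := joinGraph G₁ G₂ a b with hΓ
  set r : Fin m ⊕ Fin k → ℕ := fun v => @List.idxOf _ instBEqOfDecidableEq v L with hr
  have hrinj : Function.Injective r := by
    rw [hr]; exact hinj L hL
  have hadj_lr : ∀ i j, Γ.Adj (Sum.inl i) (Sum.inr j) ↔ (i = a ∧ j = b) := fun _ _ => Iff.rfl
  have hadj_rl : ∀ j i, Γ.Adj (Sum.inr j) (Sum.inl i) ↔ (i = a ∧ j = b) := fun _ _ => Iff.rfl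
  have hadj_ll : ∀ i j, Γ.Adj (Sum.inl i) (Sum.inl j) ↔ G₁.Adj i j := fun _ _ => Iff.rfl
  have hadj_rr : ∀ i j, Γ.Adj (Sum.inr i) (Sum.inr j) ↔ G₂.Adj i j := fun _ _ => Iff.rfl
  have h1 : ∀ i j, ¬(i = a ∧ j = b) → SubbotinAux.Nmat Γ r (Sum.inl i) (Sum.inr j) = 0 := by
    intro i j hne
    have hij : (Sum.inl i : Fin m ⊕ Fin k) ≠ Sum.inr j := by simp
    have hadj : ¬ Γ.Adj (Sum.inl i) (Sum.inr j) := fun h => hne ((hadj_lr i j).mp h)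
    simp [SubbotinAux.Nmat, hij, hadj]
  have h2 : ∀ j i, ¬(j = b ∧ i = a) → SubbotinAux.Nmat Γ r (Sum.inr j) (Sum.inl i) = 0 := by
    intro j i hne
    have hij : (Sum.inr j : Fin m ⊕ Fin k) ≠ Sum.inl i := by simp
    have hadj : ¬ Γ.Adj (Sum.inr j) (Sum.inl i) := fun h => by
      have := (hadj_rl j i).mp h; exact hne ⟨this.2, this.1⟩
    simp [SubbotinAux.Nmat, hij, hadj]
  have hsplit := SubbotinAux.det_split (SubbotinAux.Nmat Γ r) a b h1 h2
  -- identify blocks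
  have hb11 : (SubbotinAux.Nmat Γ r).toBlocks₁₁
      = SubbotinAux.Nmat G₁ (fun v => r (Sum.inl v)) := by
    refine Matrix.ext fun i j => ?_
    by_cases hij : i = j
    · simp [SubbotinAux.Nmat, Matrix.toBlocks₁₁, hij]
    · have hne : (Sum.inl i : Fin m ⊕ Fin k) ≠ Sum.inl j := by simp [hij]
      have : Γ.Adj (Sum.inl i) (Sum.inl j) ↔ G₁.Adj i j := hadj_ll i j
      simp [SubbotinAux.Nmat, Matrix.toBlocks₁₁, hij, hne, this]
  have hb22 : (SubbotinAux.Nmat Γ r).toBlocks₂₂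
      = SubbotinAux.Nmat G₂ (fun v => r (Sum.inr v)) := by
    refine Matrix.ext fun i j => ?_
    by_cases hij : i = j
    · simp [SubbotinAux.Nmat, Matrix.toBlocks₂₂, hij]
    · have hne : (Sum.inr i : Fin m ⊕ Fin k) ≠ Sum.inr j := by simp [hij]
      have : Γ.Adj (Sum.inr i) (Sum.inr j) ↔ G₂.Adj i j := hadj_rr i j
      simp [SubbotinAux.Nmat, Matrix.toBlocks₂₂, hij, hne, this]
  -- the edge weight product is X
  have hadjab : Γ.Adj (Sum.inl a) (Sum.inr b) := (hadj_lr a b).mpr ⟨rfl, rfl⟩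
  have hadjba : Γ.Adj (Sum.inr b) (Sum.inl a) := (hadj_rl b a).mpr ⟨rfl, rfl⟩
  have hX : SubbotinAux.Nmat Γ r (Sum.inl a) (Sum.inr b)
      * SubbotinAux.Nmat Γ r (Sum.inr b) (Sum.inl a) = Polynomial.X := by
    have hne1 : (Sum.inl a : Fin m ⊕ Fin k) ≠ Sum.inr b := by simp
    have hne2 : (Sum.inr b : Fin m ⊕ Fin k) ≠ Sum.inl a := by simp
    have hv1 : SubbotinAux.Nmat Γ r (Sum.inl a) (Sum.inr b)
        = if r (Sum.inl a) < r (Sum.inr b) then Polynomial.X else 1 := by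
      simp [SubbotinAux.Nmat, hne1, hadjab]
    have hv2 : SubbotinAux.Nmat Γ r (Sum.inr b) (Sum.inl a)
        = if r (Sum.inr b) < r (Sum.inl a) then Polynomial.X else 1 := by
      simp [SubbotinAux.Nmat, hne2, hadjba]
    have hner : r (Sum.inl a) ≠ r (Sum.inr b) := fun hh => by
      have := hrinj hh; simp at this
    rcases lt_or_gt_of_ne hner with h | h
    · rw [hv1, hv2, if_pos h, if_neg (not_lt.mpr (le_of_lt h)), mul_one]
    · rw [hv1, hv2, if_neg (not_lt.mpr (le_of_lt h)), if_pos h, one_mul]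
  rw [hb11, hb22, hX] at hsplit
  -- order independence for the blocks
  have eq1 : (SubbotinAux.Nmat G₁ (fun v => r (Sum.inl v))).det
      = (SubbotinAux.Nmat G₁ (fun v => L₁.idxOf v)).det :=
    SubbotinAux.det_Nmat_indep (Fintype.card (Fin m)) rfl G₁ hG₁.IsAcyclic _ _
      (fun _ _ hh => Sum.inl_injective (hrinj hh)) (hinj L₁ hL₁)
  have eq2 : (SubbotinAux.Nmat G₂ (fun v => r (Sum.inr v))).det
      = (SubbotinAux.Nmat G₂ (fun v => L₂.idxOf v)).det :=
    SubbotinAux.det_Nmat_indep (Fintype.card (Fin k)) rfl G₂ hG₂.IsAcyclic _ _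
      (fun _ _ hh => Sum.inr_injective (hrinj hh)) (hinj L₂ hL₂)
  -- the minors
  have hm1 : SubbotinAux.toMinor (SubbotinAux.Nmat G₁ (fun v => r (Sum.inl v))) a
      = SubbotinAux.Nmat (deleteVertex G₁ a) (fun y => r (Sum.inl y.val)) := by
    have := (SubbotinAux.Nmat_comap G₁ (fun v => r (Sum.inl v)) (fun v => v ≠ a)).symm
    exact this
  have hm2 : SubbotinAux.toMinor (SubbotinAux.Nmat G₂ (fun v => r (Sum.inr v))) b
      = SubbotinAux.Nmat (deleteVertex G₂ b) (fun y => r (Sum.inr y.val)) := by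
    have := (SubbotinAux.Nmat_comap G₂ (fun v => r (Sum.inr v)) (fun v => v ≠ b)).symm
    exact this
  have eq3 : (SubbotinAux.Nmat (deleteVertex G₁ a) (fun y => r (Sum.inl y.val))).det
      = (SubbotinAux.Nmat (deleteVertex G₁ a) (fun v => @List.idxOf _ instBEqOfDecidableEq v L₁')).det :=
    SubbotinAux.det_Nmat_indep (Fintype.card {v : Fin m // v ≠ a}) rfl _
      (SubbotinAux.comap_isAcyclic G₁ hG₁.IsAcyclic Subtype.val Subtype.val_injective) _ _
      (fun _ _ hh => Subtype.ext (Sum.inl_injective (hrinj hh))) (hinj L₁' hL₁')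
  have eq4 : (SubbotinAux.Nmat (deleteVertex G₂ b) (fun y => r (Sum.inr y.val))).det
      = (SubbotinAux.Nmat (deleteVertex G₂ b) (fun v => @List.idxOf _ instBEqOfDecidableEq v L₂')).det :=
    SubbotinAux.det_Nmat_indep (Fintype.card {v : Fin k // v ≠ b}) rfl _
      (SubbotinAux.comap_isAcyclic G₂ hG₂.IsAcyclic Subtype.val Subtype.val_injective) _ _
      (fun _ _ hh => Subtype.ext (Sum.inr_injective (hrinj hh))) (hinj L₂' hL₂')
  rw [hm1, hm2, eq1, eq2, eq3, eq4, hr] at hsplit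
  exact hsplit

end
end

section
/- Single-vertex splitting: if Γ is obtained from a simply-laced tree Γ₁ by attaching a single new vertex by an edge to vertex α ∈ Γ₁, then X(Γ, λ) = −(λ + 1)·X(Γ₁, λ) − λ·X(Γ₁∖α, λ). -/
open Polynomial Matrix

noncomputable section
open scoped Classical

/-- The graph obtained from `G₁` by attaching one new vertex by a single edge to the
vertex `a` of `G₁`. -/
def attachVertex {V₁ : Type*} (G₁ : SimpleGraph V₁) (a : V₁) : SimpleGraph (V₁ ⊕ Unit) where
  Adj x y :=
    match x, y with
    | Sum.inl u, Sum.inl v => G₁.Adj u v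
    | Sum.inr _, Sum.inr _ => False
    | Sum.inl u, Sum.inr _ => u = a
    | Sum.inr _, Sum.inl v => v = a
  symm := by
    constructor
    rintro (u | u) (v | v) h
    · exact G₁.adj_symm h
    · exact h
    · exact h
    · exact h.elim
  loopless := by
    constructor
    rintro (u | u) h
    · exact G₁.ne_of_adj h rfl
    · exact h.elim

namespace SVSaux

variable {V : Type*}

/-- `j` occurs strictly before `k` in the list `L`. -/
def bef (L : List V) (j k : V) : Prop := [j, k].Sublist L

lemma bef_mem_left {L : List V} {j k : V} (h : bef L j k) : j ∈ L :=
  h.subset (by simp)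

lemma bef_mem_right {L : List V} {j k : V} (h : bef L j k) : k ∈ L :=
  h.subset (by simp)

lemma bef_cons {i : V} {L : List V} {j k : V} :
    bef (i :: L) j k ↔ (j = i ∧ k ∈ L) ∨ bef L j k := by
  constructor
  · intro h
    cases h with
    | cons _ h => exact Or.inr h
    | cons_cons _ h => exact Or.inl ⟨rfl, List.singleton_sublist.mp h⟩
  · rintro (⟨rfl, hk⟩ | h)
    · exact List.Sublist.cons₂ _ (List.singleton_sublist.mpr hk)
    · exact h.cons _

lemma bef_nil {j k : V} : ¬ bef ([] : List V) j k := by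
  intro h; exact absurd (bef_mem_left h) (List.not_mem_nil (a := j))

lemma bef_irrefl {L : List V} (hL : L.Nodup) (j : V) : ¬ bef L j j := by
  intro h
  have := hL.sublist h
  simp at this

lemma bef_total {L : List V} {j k : V} (hj : j ∈ L) (hk : k ∈ L) (hjk : j ≠ k) :
    bef L j k ∨ bef L k j := by
  induction L with
  | nil => simp at hj
  | cons i T ih =>
    rcases List.mem_cons.mp hj with rfl | hj'
    · left
      exact bef_cons.mpr (Or.inl ⟨rfl, by rcases List.mem_cons.mp hk with rfl | h; exact absurd rfl hjk; exact h⟩)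
    · rcases List.mem_cons.mp hk with rfl | hk'
      · right
        exact bef_cons.mpr (Or.inl ⟨rfl, hj'⟩)
      · rcases ih hj' hk' with h | h
        · exact Or.inl (bef_cons.mpr (Or.inr h))
        · exact Or.inr (bef_cons.mpr (Or.inr h))

lemma bef_asymm {L : List V} (hL : L.Nodup) {j k : V} (h1 : bef L j k) (h2 : bef L k j) : False := by
  induction L with
  | nil => exact bef_nil h1
  | cons i T ih =>
    have hiT : i ∉ T := (List.nodup_cons.mp hL).1
    have hT : T.Nodup := (List.nodup_cons.mp hL).2
    rcases bef_cons.mp h1 with ⟨rfl, hk⟩ | h1'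
    · rcases bef_cons.mp h2 with ⟨rfl, hj⟩ | h2'
      · exact hiT hk
      · exact hiT (bef_mem_right h2')
    · rcases bef_cons.mp h2 with ⟨rfl, hj⟩ | h2'
      · exact hiT (bef_mem_right h1')
      · exact ih hT h1' h2'

lemma bef_append_singleton {L : List V} {x j k : V} :
    bef (L ++ [x]) j k ↔ bef L j k ∨ (j ∈ L ∧ k = x) := by
  induction L with
  | nil =>
    simp only [List.nil_append]
    constructor
    · intro h
      rcases bef_cons.mp h with ⟨rfl, hk⟩ | h
      · simp at hk
      · exact absurd h bef_nil
    · rintro (h | ⟨h, _⟩)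
      · exact absurd h bef_nil
      · simp at h
  | cons i T ih =>
    simp only [List.cons_append]
    rw [bef_cons, bef_cons, ih]
    constructor
    · rintro (⟨rfl, hk⟩ | h | h)
      · rcases List.mem_append.mp hk with hk | hk
        · exact Or.inl (Or.inl ⟨rfl, hk⟩)
        · simp at hk
          exact Or.inr ⟨List.mem_cons_self, hk⟩
      · exact Or.inl (Or.inr h)
      · exact Or.inr ⟨List.mem_cons_of_mem _ h.1, h.2⟩
    · rintro ((⟨rfl, hk⟩ | h) | ⟨hj, hkx⟩)
      · exact Or.inl ⟨rfl, List.mem_append_left _ hk⟩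
      · exact Or.inr (Or.inl h)
      · subst hkx
        rcases List.mem_cons.mp hj with rfl | hj'
        · exact Or.inl ⟨rfl, List.mem_append_right _ (by simp)⟩
        · exact Or.inr (Or.inr ⟨hj', rfl⟩)

lemma bef_map {W : Type*} {f : V → W} (hf : Function.Injective f) {L : List V} {j k : V} :
    bef (L.map f) (f j) (f k) ↔ bef L j k := by
  constructor
  · intro h
    obtain ⟨l', hl', he⟩ := List.sublist_map_iff.mp h
    rcases l' with _ | ⟨a, _ | ⟨b, _ | ⟨c, t⟩⟩⟩ <;> simp only [List.map_cons, List.map_nil,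
      List.cons.injEq, and_true] at he
    · exact absurd he (by simp)
    · exact absurd he (by simp)
    · obtain ⟨ha, hb⟩ := he
      rwa [hf ha.symm, hf hb.symm] at hl'
    · exact absurd he (by simp)
  · intro h
    exact List.Sublist.map f h

lemma bef_get {L : List V} (p q : ℕ) (hp : p < L.length) (hq : q < L.length) (hpq : p < q) :
    bef L (L.get ⟨p, hp⟩) (L.get ⟨q, hq⟩) := by
  induction L generalizing p q with
  | nil => simp at hp
  | cons i T ih =>
    match q, hq with
    | q' + 1, hq =>
      match p, hp with
      | 0, hp =>
        exact bef_cons.mpr (Or.inl ⟨rfl, List.get_mem T _⟩)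
      | p' + 1, hp =>
        exact bef_cons.mpr (Or.inr (ih p' q' (by simpa using hp) (by simpa using hq) (by omega)))

end SVSaux

namespace SVSaux
noncomputable section
open scoped Classical

variable {V : Type*} [Fintype V] [DecidableEq V]

def NN (K : Matrix V V ℚ) (L : List V) : Matrix V V ℚ :=
  Matrix.of fun j k => if bef L j k then K j k else 0

def EE (K : Matrix V V ℚ) (L : List V) : Matrix V V ℚ :=
  Matrix.of fun j k => if j ∈ L ∧ (k ∉ L ∨ k = j) then K j k else 0

/-- rank-one "row matrix at `r`". -/
def R1 (r : V) (w : V → ℚ) : Matrix V V ℚ :=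
  Matrix.of fun j k => if j = r then w k else 0

lemma coxeterOf_nil (K : Matrix V V ℚ) : coxeterOf ℚ K [] = 1 := rfl

lemma coxeterOf_cons (K : Matrix V V ℚ) (i : V) (L : List V) :
    coxeterOf ℚ K (i :: L) = reflOf ℚ K i * coxeterOf ℚ K L := by
  simp [coxeterOf]

lemma reflOf_eq (K : Matrix V V ℚ) (i : V) : reflOf ℚ K i = 1 - R1 i (K i) := by
  ext j k
  simp only [reflOf, R1, Matrix.one_apply, Matrix.sub_apply, Matrix.of_apply]
  by_cases h1 : j = k <;> by_cases h2 : j = i <;> simp [h1, h2]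

lemma R1_mul (r : V) (w : V → ℚ) (A : Matrix V V ℚ) :
    R1 r w * A = R1 r (fun k => ∑ s, w s * A s k) := by
  ext j k
  by_cases h : j = r <;> simp [R1, Matrix.mul_apply, h]

lemma mul_R1 (r : V) (w : V → ℚ) (A : Matrix V V ℚ) :
    A * R1 r w = Matrix.of fun j k => A j r * w k := by
  ext j k
  simp [R1, Matrix.mul_apply, mul_ite]

/-- rows of the Coxeter matrix at vertices not occurring in `L` are identity rows. -/
lemma coxeterOf_row_not_mem (K : Matrix V V ℚ) {L : List V} {s : V} (hs : s ∉ L) (k : V) :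
    coxeterOf ℚ K L s k = (1 : Matrix V V ℚ) s k := by
  induction L with
  | nil => simp [coxeterOf_nil]
  | cons i T ih =>
    have hsi : s ≠ i := fun h => hs (h ▸ (List.mem_cons_self (a := i) (l := T)))
    have hsT : s ∉ T := fun h => hs (List.mem_cons_of_mem _ h)
    rw [coxeterOf_cons, Matrix.mul_apply]
    have : ∀ t, reflOf ℚ K i s t * coxeterOf ℚ K T t k
        = (if s = t then 1 else 0) * coxeterOf ℚ K T t k := by
      intro t; simp [reflOf, hsi]
    rw [Finset.sum_congr rfl fun t _ => this t]
    simp [ih hsT]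

theorem key (K : Matrix V V ℚ) (hK : ∀ a b, K a b = K b a) (L : List V) (hL : L.Nodup) :
    (1 + NN K L) * coxeterOf ℚ K L = 1 - EE K L - (NN K L)ᵀ := by
  induction L with
  | nil =>
    have h1 : NN K [] = 0 := by ext j k; simp [NN, bef_nil]
    have h2 : EE K [] = 0 := by ext j k; simp [EE]
    simp [coxeterOf_nil, h1, h2]
  | cons i T ih =>
    have hiT : i ∉ T := (List.nodup_cons.mp hL).1
    have hT : T.Nodup := (List.nodup_cons.mp hL).2
    have IH := ih hT
    set U : Matrix V V ℚ := 1 + NN K T with hU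
    set P : Matrix V V ℚ := R1 i (fun k => if k ∈ T then K i k else 0) with hP
    have hNNcons : NN K (i :: T) = NN K T + P := by
      ext j k
      by_cases hj : j = i
      · subst hj
        have : ¬ bef T j k := fun h => hiT (bef_mem_left h)
        simp [NN, P, R1, bef_cons, this]
      · simp [NN, P, R1, bef_cons, hj]
    -- step 1 : (U + P) * reflOf = U + P - R1 i (K i)
    have hUR : U * R1 i (K i) = R1 i (K i) := by
      rw [mul_R1]
      ext j k
      have hNcol : ∀ j' : V, NN K T j' i = 0 := by
        intro j'
        simp only [NN, Matrix.of_apply, ite_eq_right_iff]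
        intro h; exact ((hiT (bef_mem_right h)).elim : K j' i = 0)
      by_cases hj : j = i
      · subst hj
        simp [hU, Matrix.add_apply, Matrix.one_apply, hNcol, R1]
      · simp [hU, Matrix.add_apply, Matrix.one_apply, hj, hNcol, R1]
    have hPR : P * R1 i (K i) = 0 := by
      rw [mul_R1]
      ext j k
      simp [hP, R1, hiT]
    have hUPR : (U + P) * R1 i (K i) = R1 i (K i) := by
      rw [add_mul, hUR, hPR, add_zero]
    have step1 : (U + P) * reflOf ℚ K i = U + P - R1 i (K i) := by
      rw [reflOf_eq, mul_sub, mul_one, hUPR]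
    -- step 2 : (P - R1 i (K i)) = - R1 i w∉
    have step2 : P - R1 i (K i) = - R1 i (fun k => if k ∈ T then 0 else K i k) := by
      ext j k
      by_cases hj : j = i <;> by_cases hk : k ∈ T <;>
        simp [hP, R1, hj, hk, Matrix.sub_apply]
    -- step 3 : R1 i w∉ * C = R1 i w∉
    have step3 : R1 i (fun k => if k ∈ T then 0 else K i k) * coxeterOf ℚ K T
        = R1 i (fun k => if k ∈ T then 0 else K i k) := by
      rw [R1_mul]
      ext j k
      by_cases hj : j = i
      · subst hj
        have : ∀ s, (if s ∈ T then (0:ℚ) else K j s) * coxeterOf ℚ K T s k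
            = (if s ∈ T then 0 else K j s) * (if s = k then 1 else 0) := by
          intro s
          by_cases hs : s ∈ T
          · simp [hs]
          · rw [coxeterOf_row_not_mem K hs k]; simp [Matrix.one_apply]
        simp only [R1, Matrix.of_apply, if_pos rfl]
        rw [Finset.sum_congr rfl fun s _ => this s]
        simp [mul_ite]
      · simp [R1, hj]
    -- assemble LHS
    have lhs_eq : (1 + NN K (i :: T)) * coxeterOf ℚ K (i :: T)
        = U * coxeterOf ℚ K T - R1 i (fun k => if k ∈ T then 0 else K i k) := by
      rw [coxeterOf_cons, hNNcons, ← mul_assoc]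
      have h1 : (1 : Matrix V V ℚ) + (NN K T + P) = (U + P) := by rw [hU]; abel
      rw [h1, step1]
      have h2 : U + P - R1 i (K i) = U + -R1 i (fun k => if k ∈ T then 0 else K i k) := by
        rw [← step2]; abel
      rw [h2, add_mul, neg_mul, step3]
      abel
    rw [lhs_eq, IH]
    -- final entrywise identity: EE' + Pᵀ = EE T + R1 i w∉   (rearranged)
    have final : EE K (i :: T) + (NN K (i :: T))ᵀ
        = EE K T + (NN K T)ᵀ + R1 i (fun k => if k ∈ T then 0 else K i k) := by
      rw [hNNcons, Matrix.transpose_add]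
      have : EE K (i :: T) + Pᵀ = EE K T + R1 i (fun k => if k ∈ T then 0 else K i k) := by
        ext j k
        simp only [Matrix.add_apply, Matrix.transpose_apply, EE, P, R1, Matrix.of_apply]
        by_cases hj : j = i
        · subst hj
          have hcond : (j ∈ j :: T ∧ (k ∉ j :: T ∨ k = j)) ↔ (k ∉ T) := by
            constructor
            · rintro ⟨-, h | rfl⟩
              · exact fun hk => h (List.mem_cons_of_mem _ hk)
              · exact hiT
            · intro hk
              refine ⟨List.mem_cons_self, ?_⟩
              by_cases hki : k = j
              · exact Or.inr hki
              · exact Or.inl (by simp [hki, hk])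
          rw [if_congr hcond rfl rfl]
          by_cases hk : k ∈ T <;> simp [hk, hiT]
        · have hjii : j ∈ i :: T ↔ j ∈ T := by simp [List.mem_cons, hj]
          by_cases hjT : j ∈ T
          · by_cases hk : k = i
            · subst hk
              have h1 : ¬ (j ∈ k :: T ∧ (k ∉ k :: T ∨ k = j)) := by
                rintro ⟨-, h | h⟩
                · exact h (List.mem_cons_self)
                · exact hj h.symm
              have h2 : (j ∈ T ∧ (k ∉ T ∨ k = j)) := ⟨hjT, Or.inl hiT⟩
              simp only [if_pos h2, if_neg h1, if_neg hj, if_pos rfl, if_pos hjT]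
              rw [hK k j]
              simp
            · have h3 : (k ∉ i :: T ∨ k = j) ↔ (k ∉ T ∨ k = j) := by
                constructor
                · rintro (h | h)
                  · exact Or.inl (fun hx => h (List.mem_cons_of_mem _ hx))
                  · exact Or.inr h
                · rintro (h | h)
                  · exact Or.inl (by simp [List.mem_cons, hk, h])
                  · exact Or.inr h
              rw [if_congr (and_congr hjii h3) rfl rfl]
              simp [hk, hj]
          · have h4 : ¬ (j ∈ i :: T ∧ (k ∉ i :: T ∨ k = j)) := fun h => hjT (hjii.mp h.1)
            have h5 : ¬ (j ∈ T ∧ (k ∉ T ∨ k = j)) := fun h => hjT h.1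
            simp [h4, h5, hj, hjT]
      rw [show EE K T + (NN K T)ᵀ + R1 i (fun k => if k ∈ T then 0 else K i k)
          = (EE K T + R1 i (fun k => if k ∈ T then 0 else K i k)) + (NN K T)ᵀ by abel, ← this]
      abel
    rw [show (1:Matrix V V ℚ) - EE K T - (NN K T)ᵀ - R1 i (fun k => if k ∈ T then 0 else K i k)
        = 1 - (EE K T + (NN K T)ᵀ + R1 i (fun k => if k ∈ T then 0 else K i k)) by abel,
      ← final]
    abel

end
end SVSaux

namespace SVSaux
noncomputable section
open scoped Classical

variable {V : Type*} [Fintype V] [DecidableEq V]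

lemma key_enum (K : Matrix V V ℚ) (hK : ∀ a b, K a b = K b a) (hdiag : ∀ v, K v v = 2)
    {L : List V} (hL : IsEnum L) :
    (1 + NN K L) * coxeterOf ℚ K L = -(1 + (NN K L)ᵀ) := by
  rw [key K hK L hL.1]
  have hEE : EE K L = (2 : ℚ) • (1 : Matrix V V ℚ) := by
    ext j k
    have hcond : (j ∈ L ∧ (k ∉ L ∨ k = j)) ↔ k = j := by
      constructor
      · rintro ⟨-, h | h⟩
        · exact absurd (hL.2 k) h
        · exact h
      · intro h; exact ⟨hL.2 j, Or.inr h⟩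
    show (if j ∈ L ∧ (k ∉ L ∨ k = j) then K j k else 0) = (2:ℚ) • (1 : Matrix V V ℚ) j k
    rw [if_congr hcond rfl rfl]
    by_cases h : k = j
    · subst h; simp [Matrix.one_apply, hdiag]
    · simp [Matrix.one_apply, h, Ne.symm h]
  rw [hEE]
  ext j k
  by_cases h : j = k <;>
    simp [Matrix.sub_apply, Matrix.add_apply, Matrix.neg_apply, Matrix.smul_apply,
      Matrix.one_apply, h] <;> ring

/-- the order-decorated "vertex matrix" over `ℚ[X]`. -/
def MM (K : Matrix V V ℚ) (L : List V) : Matrix V V ℚ[X] :=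
  Matrix.of fun j k =>
    if j = k then X + 1
    else if bef L j k then Polynomial.C (K j k) * X
    else if bef L k j then Polynomial.C (K j k) else 0

lemma mainMM (K : Matrix V V ℚ) (hK : ∀ a b, K a b = K b a) (hdiag : ∀ v, K v v = 2)
    {L : List V} (hL : IsEnum L) :
    ((1 + NN K L).map Polynomial.C)
      * ((coxeterOf ℚ K L).map Polynomial.C - Matrix.scalar V (X : ℚ[X]))
      = -(MM K L) := by
  rw [mul_sub, ← Matrix.map_mul, key_enum K hK hdiag hL]
  ext j k
  have hscal : (((1 + NN K L).map Polynomial.C) * Matrix.scalar V (X : ℚ[X])) j k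
      = Polynomial.C ((1 + NN K L) j k) * X := by
    rw [Matrix.scalar_apply, Matrix.mul_diagonal, Matrix.map_apply]
  rw [Matrix.sub_apply, hscal]
  rw [Matrix.map_apply, Matrix.neg_apply, Matrix.neg_apply]
  by_cases h : j = k
  · subst h
    have hd : ¬ bef L j j := bef_irrefl hL.1 j
    simp [NN, MM, Matrix.add_apply, Matrix.one_apply, Matrix.transpose_apply, hd]
    try ring
  · have h' : ¬ k = j := Ne.symm h
    by_cases h1 : bef L j k
    · have h2 : ¬ bef L k j := fun hh => bef_asymm hL.1 h1 hh
      simp [NN, MM, Matrix.add_apply, Matrix.one_apply, Matrix.transpose_apply, h, h', h1, h2]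
      try ring
    · by_cases h2 : bef L k j
      · simp [NN, MM, Matrix.add_apply, Matrix.one_apply, Matrix.transpose_apply, h, h', h1, h2,
          hK k j]
      · simp [NN, MM, Matrix.add_apply, Matrix.one_apply, Matrix.transpose_apply, h, h', h1, h2]

lemma det_one_add_NN (K : Matrix V V ℚ) {L : List V} (hL : IsEnum L) :
    ((1 + NN K L).map Polynomial.C).det = 1 := by
  classical
  set e : Fin L.length ≃ V := hL.1.getEquivOfForallMemList L hL.2 with he
  have happ : ∀ p : Fin L.length, e p = L.get p := by
    intro p; simp [he, List.Nodup.getEquivOfForallMemList]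
  rw [← Matrix.det_reindex_self e.symm (((1 + NN K L)).map Polynomial.C)]
  have htri : (Matrix.reindex e.symm e.symm ((1 + NN K L).map Polynomial.C)).BlockTriangular id := by
    intro p q hqp
    have hpq : e p ≠ e q := by
      intro hh
      have hpq' : p = q := e.injective hh
      subst hpq'
      exact lt_irrefl _ hqp
    have hnb : ¬ bef L (e p) (e q) := by
      intro hb
      have := bef_get q p q.isLt p.isLt (by exact hqp)
      rw [← happ q, ← happ p] at this
      exact bef_asymm hL.1 hb this
    simp [Matrix.reindex_apply, Matrix.submatrix_apply, Matrix.map_apply, Matrix.add_apply,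
      Matrix.one_apply, NN, hpq, hnb]
  rw [Matrix.det_of_upperTriangular htri]
  have : ∀ p : Fin L.length,
      (Matrix.reindex e.symm e.symm ((1 + NN K L).map Polynomial.C)) p p = 1 := by
    intro p
    have hd : ¬ bef L (e p) (e p) := bef_irrefl hL.1 _
    simp [Matrix.reindex_apply, Matrix.submatrix_apply, Matrix.map_apply, Matrix.add_apply,
      Matrix.one_apply, NN, hd]
  simp [this]

theorem Xchar_eq_detMM (K : Matrix V V ℚ) (hK : ∀ a b, K a b = K b a) (hdiag : ∀ v, K v v = 2)
    {L : List V} (hL : IsEnum L) :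
    Xchar K L = (-1 : ℚ[X]) ^ (Fintype.card V) * (MM K L).det := by
  have h := congrArg Matrix.det (mainMM K hK hdiag hL)
  rw [Matrix.det_mul, det_one_add_NN K hL, one_mul, Matrix.det_neg] at h
  exact h

end
end SVSaux

namespace SVSaux
noncomputable section
open scoped Classical

variable {V : Type*}

/-- chain of walk steps along `g`. -/
def walkChain (G : SimpleGraph V) (g : ℕ → V) (hadj : ∀ k, G.Adj (g (k+1)) (g k)) :
    (k : ℕ) → G.Walk (g k) (g 0)
  | 0 => SimpleGraph.Walk.nil
  | (k+1) => SimpleGraph.Walk.cons (hadj k) (walkChain G g hadj k)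

lemma walkChain_support (G : SimpleGraph V) (g : ℕ → V) (hadj : ∀ k, G.Adj (g (k+1)) (g k))
    (k : ℕ) : (walkChain G g hadj k).support = (List.map g (List.range (k+1))).reverse := by
  induction k with
  | zero => simp [walkChain, List.range_succ]
  | succ k ih =>
    rw [walkChain, SimpleGraph.Walk.support_cons, ih]
    rw [List.range_succ (n := k+1)]
    simp

lemma walkChain_length (G : SimpleGraph V) (g : ℕ → V) (hadj : ∀ k, G.Adj (g (k+1)) (g k))
    (k : ℕ) : (walkChain G g hadj k).length = k := by
  induction k with
  | zero => rfl
  | succ k ih => rw [walkChain, SimpleGraph.Walk.length_cons, ih]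

lemma cycle_contra (G : SimpleGraph V) (hG : G.IsAcyclic) (g : ℕ → V)
    (hadj : ∀ k, G.Adj (g (k+1)) (g k)) (m : ℕ) (hm : 3 ≤ m) (hper : g m = g 0)
    (hinj : ∀ k l, k < m → l < m → g k = g l → k = l) : False := by
  have h0 : m - 1 + 1 = m := by omega
  have hadj0 : G.Adj (g 0) (g (m-1)) := by
    have := hadj (m-1)
    rwa [h0, hper] at this
  have hp1 : (SimpleGraph.Walk.cons hadj0 SimpleGraph.Walk.nil : G.Walk (g 0) (g (m-1))).IsPath := by
    rw [SimpleGraph.Walk.isPath_def]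
    simp only [SimpleGraph.Walk.support_cons, SimpleGraph.Walk.support_nil]
    refine List.nodup_cons.mpr ⟨?_, List.nodup_singleton _⟩
    intro hmem
    simp only [List.mem_singleton] at hmem
    have := hinj 0 (m-1) (by omega) (by omega) hmem
    omega
  have hp2' : (walkChain G g hadj (m-1)).IsPath := by
    rw [SimpleGraph.Walk.isPath_def, walkChain_support, h0, List.nodup_reverse]
    refine List.Nodup.map_on ?_ List.nodup_range
    intro x hx y hy hxy
    exact hinj x y (List.mem_range.mp hx) (List.mem_range.mp hy) hxy
  have hp2 : (walkChain G g hadj (m-1)).reverse.IsPath := hp2'.reverse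
  have := SimpleGraph.isAcyclic_iff_path_unique.mp hG
    ⟨_, hp1⟩ ⟨(walkChain G g hadj (m-1)).reverse, hp2⟩
  have hlen := congrArg (fun p : G.Path (g 0) (g (m-1)) => p.1.length) this
  simp only [SimpleGraph.Walk.length_cons, SimpleGraph.Walk.length_nil,
    SimpleGraph.Walk.length_reverse, walkChain_length] at hlen
  omega

def InvAt (G : SimpleGraph V) : Prop :=
  ∀ σ : Equiv.Perm V, (∀ j, σ j ≠ j → G.Adj (σ j) j) → ∀ i, σ (σ i) = i

lemma perm_stuff [Fintype V] (σ : Equiv.Perm V) (i : V) (h1 : σ i ≠ i) (h2 : σ (σ i) ≠ i) :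
    ∃ m : ℕ, 3 ≤ m ∧ (⇑σ)^[m] i = i ∧
      (∀ k l, k < m → l < m → (⇑σ)^[k] i = (⇑σ)^[l] i → k = l) ∧
      (∀ k, σ ((⇑σ)^[k] i) ≠ (⇑σ)^[k] i) := by
  classical
  have hper : Function.IsPeriodicPt (⇑σ) (orderOf σ) i := by
    show (⇑σ)^[orderOf σ] i = i
    rw [Equiv.Perm.iterate_eq_pow, pow_orderOf_eq_one]
    rfl
  set m := Function.minimalPeriod (⇑σ) i with hm
  have hmpos : 0 < m := hper.minimalPeriod_pos (orderOf_pos σ)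
  have hmin : (⇑σ)^[m] i = i := Function.iterate_minimalPeriod
  have hm1 : m ≠ 1 := by
    intro h
    apply h1
    have := hmin
    rw [h] at this
    simpa using this
  have hm2 : m ≠ 2 := by
    intro h
    apply h2
    have := hmin
    rw [h] at this
    simpa [Function.iterate_succ_apply'] using this
  have hm3 : 3 ≤ m := by omega
  have hinj : ∀ k l, k < m → l < m → (⇑σ)^[k] i = (⇑σ)^[l] i → k = l := by
    intro k l hk hl he
    exact Function.iterate_injOn_Iio_minimalPeriod (by exact hk) (by exact hl) he
  have hnf : ∀ k, σ ((⇑σ)^[k] i) ≠ (⇑σ)^[k] i := by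
    have hsmall : ∀ k, k < m → σ ((⇑σ)^[k] i) ≠ (⇑σ)^[k] i := by
      intro k hk hfix
      rcases Nat.eq_zero_or_pos k with rfl | hkpos
      · exact h1 hfix
      · have hfix' : Function.IsFixedPt (⇑σ) ((⇑σ)^[k] i) := hfix
        have hit : (⇑σ)^[m - k] ((⇑σ)^[k] i) = (⇑σ)^[k] i := hfix'.iterate (m - k)
        have : (⇑σ)^[m] i = (⇑σ)^[k] i := by
          rw [show m = (m - k) + k by omega, Function.iterate_add_apply]
          exact hit
        have hik : (⇑σ)^[k] i = i := by rw [← this, hmin]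
        have : m ≤ k := Function.IsPeriodicPt.minimalPeriod_le hkpos hik
        omega
    intro k
    have : (⇑σ)^[k % m] i = (⇑σ)^[k] i := Function.iterate_mod_minimalPeriod_eq
    rw [← this]
    exact hsmall _ (Nat.mod_lt _ hmpos)
  exact ⟨m, hm3, hmin, hinj, hnf⟩

lemma invAt_of_embed {W : Type*} [Fintype V] (G : SimpleGraph V) (H : SimpleGraph W)
    (hH : H.IsAcyclic) (f : V → W) (hf : Function.Injective f)
    (hfa : ∀ u v, G.Adj u v → H.Adj (f u) (f v)) : InvAt G := by
  intro σ hσ i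
  by_contra hcon
  have h1 : σ i ≠ i := fun h => hcon (by rw [h, h])
  obtain ⟨m, hm3, hmin, hinj, hnf⟩ := perm_stuff σ i h1 hcon
  have hadj : ∀ k, H.Adj (f ((⇑σ)^[k+1] i)) (f ((⇑σ)^[k] i)) := by
    intro k
    rw [Function.iterate_succ_apply']
    exact hfa _ _ (hσ _ (hnf k))
  refine cycle_contra H hH (fun k => f ((⇑σ)^[k] i)) hadj m hm3 ?_ ?_
  · show f ((⇑σ)^[m] i) = f ((⇑σ)^[0] i)
    rw [hmin]
    rfl
  · intro k l hk hl he
    exact hinj k l hk hl (hf (by exact he))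

lemma invAt_attach {V₁ : Type*} [Fintype V₁] (G₁ : SimpleGraph V₁) (hG₁ : G₁.IsAcyclic)
    (a : V₁) : InvAt (attachVertex G₁ a) := by
  intro σ hσ i
  by_contra hcon
  have h1 : σ i ≠ i := fun h => hcon (by rw [h, h])
  obtain ⟨m, hm3, hmin, hinj, hnf⟩ := perm_stuff σ i h1 hcon
  have hadjA : ∀ k, (attachVertex G₁ a).Adj ((⇑σ)^[k+1] i) ((⇑σ)^[k] i) := by
    intro k
    rw [Function.iterate_succ_apply']
    exact hσ _ (hnf k)
  have hadj_inr : ∀ x : V₁ ⊕ Unit, (attachVertex G₁ a).Adj x (Sum.inr ()) → x = Sum.inl a := by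
    rintro (u | u) h
    · exact congrArg Sum.inl (h : u = a)
    · exact (h : False).elim
  by_cases hcase : ∃ k, (⇑σ)^[k] i = Sum.inr ()
  · obtain ⟨k, hk⟩ := hcase
    obtain ⟨c, rfl⟩ : ∃ c, m = c + 3 := ⟨m - 3, by omega⟩
    have hsucc : (⇑σ)^[k+1] i = Sum.inl a := by
      apply hadj_inr
      rw [← hk]
      exact hadjA k
    have hpred : (⇑σ)^[k + (c+2)] i = Sum.inl a := by
      apply hadj_inr
      have h5 : (⇑σ)^[k + (c+2) + 1] i = Sum.inr () := by
        have he9 : k + (c+2) + 1 = k + (c+3) := by ring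
        rw [he9, Function.iterate_add_apply, hmin]
        exact hk
      rw [← h5]
      exact (hadjA (k + (c+2))).symm
    have heq : (⇑σ)^[k + (c+2)] i = (⇑σ)^[k+1] i := by rw [hsucc, hpred]
    have h6 : (⇑σ)^[k+1] ((⇑σ)^[c+1] i) = (⇑σ)^[k+1] i := by
      rw [← Function.iterate_add_apply]
      rw [show k + 1 + (c+1) = k + (c+2) by ring]
      exact heq
    have hit_inj : Function.Injective ((⇑σ)^[k+1]) := by
      rw [Equiv.Perm.iterate_eq_pow]
      exact (σ ^ (k+1)).injective
    have h7 : (⇑σ)^[c+1] i = i := hit_inj h6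
    have := hinj (c+1) 0 (by omega) (by omega) (by simpa using h7)
    omega
  · push_neg at hcase
    set g : ℕ → V₁ := fun k => Sum.elim id (fun _ => a) ((⇑σ)^[k] i) with hg
    have hgl : ∀ k, (⇑σ)^[k] i = Sum.inl (g k) := by
      intro k
      rcases h : (⇑σ)^[k] i with u | u
      · simp only [hg, h, Sum.elim_inl, id_eq]
      · exact absurd (by rw [h] : (⇑σ)^[k] i = Sum.inr u) (by cases u; exact hcase k)
    have hadjG : ∀ k, G₁.Adj (g (k+1)) (g k) := by
      intro k
      have h9 := hadjA k
      rw [hgl k, hgl (k+1)] at h9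
      exact (h9 : G₁.Adj (g (k+1)) (g k))
    refine cycle_contra G₁ hG₁ g hadjG m hm3 ?_ ?_
    · have h8 : (Sum.inl (g m) : V₁ ⊕ Unit) = Sum.inl (g 0) := by
        rw [← hgl, ← hgl, hmin]
        rfl
      exact Sum.inl.inj h8
    · intro k l hk hl he
      apply hinj k l hk hl
      rw [hgl k, hgl l, he]

end
end SVSaux

namespace SVSaux
noncomputable section
open scoped Classical
open Finset

variable {V : Type*} [Fintype V] [DecidableEq V]

lemma cartan_sym (G : SimpleGraph V) (a b : V) : cartanOf ℚ G a b = cartanOf ℚ G b a := by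
  unfold cartanOf
  by_cases h : a = b
  · subst h; rfl
  · rw [if_neg h, if_neg (Ne.symm h)]
    by_cases h2 : G.Adj a b
    · rw [if_pos h2, if_pos (G.adj_symm h2)]
    · rw [if_neg h2, if_neg (fun hh => h2 (G.adj_symm hh))]

lemma cartan_diag (G : SimpleGraph V) (v : V) : cartanOf ℚ G v v = 2 := by
  simp [cartanOf]

lemma det_MM_indep (G : SimpleGraph V) (hG : InvAt G) {L L' : List V}
    (hL : IsEnum L) (hL' : IsEnum L') :
    (MM (cartanOf ℚ G) L).det = (MM (cartanOf ℚ G) L').det := by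
  set K := cartanOf ℚ G with hKdef
  rw [Matrix.det_apply, Matrix.det_apply]
  refine Finset.sum_congr rfl ?_
  intro σ _
  suffices h : ∏ i, MM K L (σ i) i = ∏ i, MM K L' (σ i) i by rw [h]
  by_cases hbad : ∃ i, σ i ≠ i ∧ ¬ G.Adj (σ i) i
  · obtain ⟨i, hne, hnadj⟩ := hbad
    have hz : ∀ Lx : List V, MM K Lx (σ i) i = 0 := by
      intro Lx
      have hK0 : K (σ i) i = 0 := by simp [hKdef, cartanOf, hne, hnadj]
      simp [MM, hne, hK0]
    have e1 : ∏ x : V, MM K L (σ x) x = 0 := Finset.prod_eq_zero (Finset.mem_univ i) (hz L)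
    have e2 : ∏ x : V, MM K L' (σ x) x = 0 := Finset.prod_eq_zero (Finset.mem_univ i) (hz L')
    rw [e1, e2]
  · push_neg at hbad
    have hinv : ∀ i, σ (σ i) = i := hG σ hbad
    set S : Finset V := Finset.univ.filter (fun i => σ i ≠ i) with hS
    have hprod : ∀ Lx : List V, IsEnum Lx →
        ∏ i, MM K Lx (σ i) i = (X+1)^((Finset.univ.filter (fun i => σ i = i)).card)
          * ((-X)^((S.filter (fun i => bef Lx (σ i) i)).card)
            * (-1)^((S.filter (fun i => ¬ bef Lx (σ i) i)).card)) := by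
      intro Lx hLx
      rw [← Finset.prod_filter_mul_prod_filter_not Finset.univ (fun i => σ i = i)]
      congr 1
      · rw [Finset.prod_congr rfl (fun i hi => ?_), Finset.prod_const]
        have hii : σ i = i := (Finset.mem_filter.mp hi).2
        rw [hii]
        simp [MM]
      · have hSS : Finset.univ.filter (fun i => ¬ σ i = i) = S := rfl
        rw [hSS, ← Finset.prod_filter_mul_prod_filter_not S (fun i => bef Lx (σ i) i)]
        congr 1
        · rw [Finset.prod_congr rfl (fun i hi => ?_), Finset.prod_const]
          obtain ⟨hiS, hb⟩ := Finset.mem_filter.mp hi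
          have hne : σ i ≠ i := by
            have := Finset.mem_filter.mp hiS; exact this.2
          have hKm1 : K (σ i) i = -1 := by
            simp [hKdef, cartanOf, hne, hbad i hne]
          simp [MM, hne, hb, hKm1]
        · rw [Finset.prod_congr rfl (fun i hi => ?_), Finset.prod_const]
          obtain ⟨hiS, hb⟩ := Finset.mem_filter.mp hi
          have hne : σ i ≠ i := by
            have := Finset.mem_filter.mp hiS; exact this.2
          have hKm1 : K (σ i) i = -1 := by
            simp [hKdef, cartanOf, hne, hbad i hne]
          have hb2 : bef Lx i (σ i) := by
            rcases bef_total (hLx.2 (σ i)) (hLx.2 i) hne with h | h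
            · exact absurd h hb
            · exact h
          simp [MM, hne, hb, hb2, hKm1]
    have hcard : ∀ Lx : List V, IsEnum Lx →
        (S.filter (fun i => bef Lx (σ i) i)).card = (S.filter (fun i => ¬ bef Lx (σ i) i)).card := by
      intro Lx hLx
      refine Finset.card_bij (fun i _ => σ i) ?_ ?_ ?_
      · intro i hi
        obtain ⟨hiS, hb⟩ := Finset.mem_filter.mp hi
        have hne : σ i ≠ i := (Finset.mem_filter.mp hiS).2
        refine Finset.mem_filter.mpr ⟨Finset.mem_filter.mpr ⟨Finset.mem_univ _, ?_⟩, ?_⟩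
        · rw [hinv i]; exact fun hh => hne hh.symm
        · rw [hinv i]
          exact fun hh => bef_asymm hLx.1 hb hh
      · intro i hi j hj he
        exact σ.injective he
      · intro j hj
        obtain ⟨hjS, hb⟩ := Finset.mem_filter.mp hj
        have hne : σ j ≠ j := (Finset.mem_filter.mp hjS).2
        refine ⟨σ j, Finset.mem_filter.mpr ⟨Finset.mem_filter.mpr ⟨Finset.mem_univ _, ?_⟩, ?_⟩, hinv j⟩
        · rw [hinv j]; exact fun hh => hne hh.symm
        · rw [hinv j]
          rcases bef_total (hLx.2 j) (hLx.2 (σ j)) (fun hh => hne hh.symm) with h | h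
          · exact h
          · exact absurd h hb
    have hhalf : ∀ Lx : List V, IsEnum Lx →
        (S.filter (fun i => bef Lx (σ i) i)).card * 2 = S.card := by
      intro Lx hLx
      have h0 := Finset.card_filter_add_card_filter_not (s := S)
        (p := fun i => bef Lx (σ i) i)
      rw [← hcard Lx hLx] at h0
      omega
    have h1 := hhalf L hL
    have h2 := hhalf L' hL'
    have hceq : (S.filter (fun i => bef L (σ i) i)).card
        = (S.filter (fun i => bef L' (σ i) i)).card := by omega
    have hc2 : (S.filter (fun i => ¬ bef L (σ i) i)).card
        = (S.filter (fun i => ¬ bef L' (σ i) i)).card := by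
      rw [← hcard L hL, ← hcard L' hL', hceq]
    rw [hprod L hL, hprod L' hL', hceq, hc2]

end
end SVSaux

noncomputable section
open scoped Classical
open SVSaux Polynomial Matrix

/-- **Single-vertex splitting.** If `Γ` is obtained from a simply-laced tree `Γ₁` by
attaching a single new vertex by an edge to the vertex `α ∈ Γ₁`, then
`𝒳(Γ, λ) = −(λ + 1)·𝒳(Γ₁, λ) − λ·𝒳(Γ₁∖α, λ)`. -/
theorem single_vertex_splitting (m : ℕ) (G₁ : SimpleGraph (Fin m)) (hG₁ : G₁.IsTree)
    (a : Fin m) (L : List (Fin m ⊕ Unit)) (hL : IsEnum L)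
    (L₁ : List (Fin m)) (hL₁ : IsEnum L₁)
    (L₁' : List {v : Fin m // v ≠ a}) (hL₁' : IsEnum L₁') :
    Xchar (cartanOf ℚ (attachVertex G₁ a)) L
      = -((Polynomial.X + 1) * Xchar (cartanOf ℚ G₁) L₁)
        - Polynomial.X * Xchar (cartanOf ℚ (deleteVertex G₁ a)) L₁' := by
  have hacy : G₁.IsAcyclic := hG₁.IsAcyclic
  set Γ := attachVertex G₁ a with hΓ
  set Γ' := deleteVertex G₁ a with hΓ'
  set KΓ : Matrix (Fin m ⊕ Unit) (Fin m ⊕ Unit) ℚ := cartanOf ℚ Γ with hKΓ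
  set K₁ : Matrix (Fin m) (Fin m) ℚ := cartanOf ℚ G₁ with hK₁
  set K' : Matrix {v : Fin m // v ≠ a} {v : Fin m // v ≠ a} ℚ := cartanOf ℚ Γ' with hK'
  -- the chosen enumerations
  set Lc₁ : List (Fin m) := (L₁'.map Subtype.val) ++ [a] with hLc₁def
  set Lc : List (Fin m ⊕ Unit) := (Lc₁.map Sum.inl) ++ [Sum.inr ()] with hLcdef
  have hLc₁ : IsEnum Lc₁ := by
    constructor
    · rw [List.nodup_append]
      refine ⟨hL₁'.1.map Subtype.val_injective, List.nodup_singleton _, ?_⟩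
      intro x hx y hy hxa
      simp only [List.mem_singleton] at hy
      subst hy
      obtain ⟨⟨v, hv⟩, -, hval⟩ := List.mem_map.mp hx
      exact hv (hxa ▸ (by simpa using hval))
    · intro v
      by_cases hv : v = a
      · subst hv; exact List.mem_append_right _ (by simp)
      · exact List.mem_append_left _ (List.mem_map.mpr ⟨⟨v, hv⟩, hL₁'.2 _, rfl⟩)
  have hLc : IsEnum Lc := by
    constructor
    · rw [List.nodup_append]
      refine ⟨hLc₁.1.map Sum.inl_injective, List.nodup_singleton _, ?_⟩
      intro x hx y hy hxa
      simp only [List.mem_singleton] at hy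
      subst hy
      subst hxa
      obtain ⟨v, -, h⟩ := List.mem_map.mp hx
      exact absurd h (by simp)
    · rintro (v | v)
      · exact List.mem_append_left _ (List.mem_map.mpr ⟨v, hLc₁.2 _, rfl⟩)
      · cases v; exact List.mem_append_right _ (by simp)
  -- before-facts
  have hbef_inl : ∀ j k : Fin m, bef Lc (Sum.inl j) (Sum.inl k) ↔ bef Lc₁ j k := by
    intro j k
    rw [hLcdef, bef_append_singleton]
    constructor
    · rintro (h | ⟨-, h⟩)
      · exact (bef_map Sum.inl_injective).mp h
      · simp at h
    · intro h
      exact Or.inl ((bef_map Sum.inl_injective).mpr h)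
  have hbef_ainr : bef Lc (Sum.inl a) (Sum.inr ()) := by
    rw [hLcdef, bef_append_singleton]
    exact Or.inr ⟨List.mem_map.mpr ⟨a, List.mem_append_right _ (by simp), rfl⟩, rfl⟩
  have hbef_inr_not : ∀ y : Fin m ⊕ Unit, ¬ bef Lc (Sum.inr ()) y := by
    intro y h
    rw [hLcdef, bef_append_singleton] at h
    rcases h with h | ⟨h, -⟩
    · have := bef_mem_left h
      simp at this
    · simp at h
  have hbef_sub : ∀ j k : {v : Fin m // v ≠ a}, bef Lc₁ j.val k.val ↔ bef L₁' j k := by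
    intro j k
    rw [hLc₁def, bef_append_singleton]
    constructor
    · rintro (h | ⟨-, h⟩)
      · exact (bef_map Subtype.val_injective).mp h
      · exact absurd h k.2
    · intro h
      exact Or.inl ((bef_map Subtype.val_injective).mpr h)
  -- cartan entry facts
  have hcar_inl : ∀ j k : Fin m, KΓ (Sum.inl j) (Sum.inl k) = K₁ j k := by
    intro j k
    rw [hKΓ, hK₁]
    unfold cartanOf
    by_cases hjk : j = k
    · subst hjk; simp
    · rw [if_neg hjk, if_neg (by simpa using hjk)]
      rw [if_congr (show Γ.Adj (Sum.inl j) (Sum.inl k) ↔ G₁.Adj j k from Iff.rfl) rfl rfl]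
  have hcar_sub : ∀ j k : {v : Fin m // v ≠ a}, K₁ j.val k.val = K' j k := by
    intro j k
    rw [hK₁, hK']
    unfold cartanOf
    by_cases hjk : j = k
    · subst hjk; simp
    · rw [if_neg (fun h => hjk (Subtype.ext h)), if_neg hjk]
      rw [if_congr (show G₁.Adj j.val k.val ↔ Γ'.Adj j k from Iff.rfl) rfl rfl]
  -- block entry facts for MΓ := MM KΓ Lc
  set MΓ := MM KΓ Lc with hMΓ
  set A := MM K₁ Lc₁ with hA
  set A' := MM K' L₁' with hA'
  have F1 : ∀ j k : Fin m, MΓ (Sum.inl j) (Sum.inl k) = A j k := by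
    intro j k
    rw [hMΓ, hA]
    unfold MM
    simp only [Matrix.of_apply]
    by_cases hjk : j = k
    · subst hjk; simp
    · rw [if_neg (by simpa using hjk), if_neg hjk,
        if_congr (hbef_inl j k) rfl rfl, if_congr (hbef_inl k j) rfl rfl, hcar_inl j k]
  have F2a : MΓ (Sum.inl a) (Sum.inr ()) = -X := by
    rw [hMΓ]
    unfold MM
    simp only [Matrix.of_apply]
    rw [if_neg (by simp), if_pos hbef_ainr]
    have : KΓ (Sum.inl a) (Sum.inr ()) = -1 := by
      rw [hKΓ]; unfold cartanOf
      rw [if_neg (by simp), if_pos (show Γ.Adj (Sum.inl a) (Sum.inr ()) from rfl)]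
    rw [this]
    simp
  have F2b : ∀ j : Fin m, j ≠ a → MΓ (Sum.inl j) (Sum.inr ()) = 0 := by
    intro j hj
    rw [hMΓ]
    unfold MM
    simp only [Matrix.of_apply]
    have hK0 : KΓ (Sum.inl j) (Sum.inr ()) = 0 := by
      rw [hKΓ]; unfold cartanOf
      rw [if_neg (by simp), if_neg (show ¬ Γ.Adj (Sum.inl j) (Sum.inr ()) from hj)]
    rw [if_neg (by simp), hK0]
    simp
  have F2c : MΓ (Sum.inr ()) (Sum.inl a) = -1 := by
    rw [hMΓ]
    unfold MM
    simp only [Matrix.of_apply]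
    rw [if_neg (by simp), if_neg (hbef_inr_not _), if_pos hbef_ainr]
    have : KΓ (Sum.inr ()) (Sum.inl a) = -1 := by
      rw [hKΓ]; unfold cartanOf
      rw [if_neg (by simp), if_pos (show Γ.Adj (Sum.inr ()) (Sum.inl a) from rfl)]
    rw [this]
    simp
  have F2d : ∀ k : Fin m, k ≠ a → MΓ (Sum.inr ()) (Sum.inl k) = 0 := by
    intro k hk
    rw [hMΓ]
    unfold MM
    simp only [Matrix.of_apply]
    have hK0 : KΓ (Sum.inr ()) (Sum.inl k) = 0 := by
      rw [hKΓ]; unfold cartanOf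
      rw [if_neg (by simp), if_neg (show ¬ Γ.Adj (Sum.inr ()) (Sum.inl k) from hk)]
    rw [if_neg (by simp), hK0]
    simp
  have F2e : MΓ (Sum.inr ()) (Sum.inr ()) = X + 1 := by
    rw [hMΓ]; unfold MM; simp
  have F3 : ∀ j k : {v : Fin m // v ≠ a}, A j.val k.val = A' j k := by
    intro j k
    rw [hA, hA']
    unfold MM
    simp only [Matrix.of_apply]
    by_cases hjk : j = k
    · subst hjk; simp
    · rw [if_neg (fun h => hjk (Subtype.ext h)), if_neg hjk,
        if_congr (hbef_sub j k) rfl rfl, if_congr (hbef_sub k j) rfl rfl, hcar_sub j k]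
  -- column decomposition
  set u1 : (Fin m ⊕ Unit) → ℚ[X] := fun x => if x = Sum.inr () then 1 else 0 with hu1
  set u2 : (Fin m ⊕ Unit) → ℚ[X] := fun x => if x = Sum.inl a then 1 else 0 with hu2
  have hcol : (fun x => MΓ x (Sum.inr ())) = ((X + 1 : ℚ[X])) • u1 + ((-X : ℚ[X])) • u2 := by
    funext x
    rcases x with j | u
    · by_cases hj : j = a
      · subst hj
        simp [hu1, hu2, F2a]
      · simp [hu1, hu2, F2b j hj, hj]
    · cases u
      simp [hu1, hu2, F2e]
  have hdet_split : MΓ.det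
      = (X + 1) * (MΓ.updateCol (Sum.inr ()) u1).det
        + (-X) * (MΓ.updateCol (Sum.inr ()) u2).det := by
    conv_lhs => rw [← Matrix.updateCol_eq_self MΓ (Sum.inr ())]
    rw [show (fun x => MΓ x (Sum.inr ())) = ((X + 1 : ℚ[X])) • u1 + ((-X : ℚ[X])) • u2 from hcol]
    rw [Matrix.det_updateCol_add, Matrix.det_updateCol_smul, Matrix.det_updateCol_smul]
  -- first determinant
  have hdet1 : (MΓ.updateCol (Sum.inr ()) u1).det = A.det := by
    have hblock : MΓ.updateCol (Sum.inr ()) u1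
        = Matrix.fromBlocks A 0 (Matrix.of fun _ k => if k = a then (-1 : ℚ[X]) else 0) 1 := by
      rw [← Matrix.ext_iff]
      intro x y
      rcases x with j | u <;> rcases y with k | v
      · rw [Matrix.updateCol_apply, if_neg (by simp)]
        exact F1 j k
      · cases v
        rw [Matrix.updateCol_apply, if_pos rfl]
        simp [hu1]
      · cases u
        rw [Matrix.updateCol_apply, if_neg (by simp)]
        by_cases hk : k = a
        · subst hk; simpa using F2c
        · simpa [hk] using F2d k hk
      · cases u; cases v
        rw [Matrix.updateCol_apply, if_pos rfl]
        simp [hu1, Matrix.one_apply]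
    rw [hblock, Matrix.det_fromBlocks_zero₁₂]
    simp
  -- second determinant
  have hdet2 : (MΓ.updateCol (Sum.inr ()) u2).det = A'.det := by
    set N₂ := MΓ.updateCol (Sum.inr ()) u2 with hN₂
    set N₃ := N₂.updateRow (Sum.inr ()) u2 with hN₃
    have hrow : N₂ (Sum.inr ()) = ((-1 : ℚ[X])) • u2 := by
      funext y
      rcases y with k | v
      · rw [hN₂, Matrix.updateCol_apply, if_neg (by simp)]
        by_cases hk : k = a
        · subst hk; simp [hu2, F2c]
        · simp [hu2, hk, F2d k hk]
      · cases v
        rw [hN₂, Matrix.updateCol_apply, if_pos rfl]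
        simp [hu2, hu2]
    have hstep1 : N₂.det = -(N₃.det) := by
      conv_lhs => rw [← Matrix.updateRow_eq_self N₂ (Sum.inr ())]
      rw [hrow]
      rw [Matrix.det_updateRow_smul, hN₃]
      ring
    set sw : Equiv.Perm (Fin m ⊕ Unit) := Equiv.swap (Sum.inl a) (Sum.inr ()) with hsw
    have hstep2 : (N₃.submatrix sw id).det = - N₃.det := by
      rw [Matrix.det_permute]
      have : Equiv.Perm.sign sw = -1 := Equiv.Perm.sign_swap (by simp)
      rw [this]
      simp
    -- N₅ := N₃.submatrix sw id as blocks
    set A₅ : Matrix (Fin m) (Fin m) ℚ[X] :=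
      Matrix.of (fun j k => if j = a then (if k = a then 1 else 0) else A j k) with hA₅
    have hblock5 : N₃.submatrix sw id
        = Matrix.fromBlocks A₅ 0 (Matrix.of fun _ k => A a k) 1 := by
      rw [← Matrix.ext_iff]
      intro x y
      rcases x with j | u <;> rcases y with k | v
      · by_cases hj : j = a
        · subst hj
          have hswa : sw (Sum.inl j) = Sum.inr () := by rw [hsw]; simp
          rw [Matrix.submatrix_apply, hswa, id]
          rw [hN₃, Matrix.updateRow_apply, if_pos rfl]
          simp [hu2, hA₅, eq_comm]
        · have hswj : sw (Sum.inl j) = Sum.inl j := by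
            rw [hsw]; exact Equiv.swap_apply_of_ne_of_ne (by simpa using hj) (by simp)
          rw [Matrix.submatrix_apply, hswj, id]
          rw [hN₃, Matrix.updateRow_apply, if_neg (by simp), hN₂,
            Matrix.updateCol_apply, if_neg (by simp)]
          simp only [hA₅, Matrix.fromBlocks_apply₁₁, Matrix.of_apply, if_neg hj]
          exact F1 j k
      · cases v
        by_cases hj : j = a
        · subst hj
          have hswa : sw (Sum.inl j) = Sum.inr () := by rw [hsw]; simp
          rw [Matrix.submatrix_apply, hswa, id]
          rw [hN₃, Matrix.updateRow_apply, if_pos rfl]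
          simp [hu2]
        · have hswj : sw (Sum.inl j) = Sum.inl j := by
            rw [hsw]; exact Equiv.swap_apply_of_ne_of_ne (by simpa using hj) (by simp)
          rw [Matrix.submatrix_apply, hswj, id]
          rw [hN₃, Matrix.updateRow_apply, if_neg (by simp), hN₂,
            Matrix.updateCol_apply, if_pos rfl]
          simp [hu2, hj]
      · cases u
        have hswi : sw (Sum.inr ()) = Sum.inl a := by rw [hsw]; simp
        rw [Matrix.submatrix_apply, hswi, id]
        rw [hN₃, Matrix.updateRow_apply, if_neg (by simp), hN₂,
          Matrix.updateCol_apply, if_neg (by simp)]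
        exact F1 a k
      · cases u; cases v
        have hswi : sw (Sum.inr ()) = Sum.inl a := by rw [hsw]; simp
        rw [Matrix.submatrix_apply, hswi, id]
        rw [hN₃, Matrix.updateRow_apply, if_neg (by simp), hN₂,
          Matrix.updateCol_apply, if_pos rfl]
        simp [hu2, Matrix.one_apply]
    have hdetA₅ : A₅.det = A'.det := by
      set e2 : Fin m ≃ ({v : Fin m // v ≠ a} ⊕ Unit) :=
        { toFun := fun v => if h : v = a then Sum.inr () else Sum.inl ⟨v, h⟩
          invFun := fun x => Sum.elim Subtype.val (fun _ => a) x
          left_inv := by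
            intro v
            by_cases h : v = a
            · subst h; simp
            · simp [h]
          right_inv := by
            rintro (⟨v, hv⟩ | u)
            · simp [hv]
            · cases u; simp } with he2
      rw [← Matrix.det_reindex_self e2 A₅]
      have hre : Matrix.reindex e2 e2 A₅
          = Matrix.fromBlocks A' (Matrix.of fun j _ => A j.val a) 0 1 := by
        rw [← Matrix.ext_iff]
        intro x y
        have he2symm_l : ∀ s : {v : Fin m // v ≠ a}, e2.symm (Sum.inl s) = s.val := by
          intro s; rfl
        have he2symm_r : e2.symm (Sum.inr ()) = a := rfl
        rcases x with s | u <;> rcases y with t | v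
        · simp only [Matrix.reindex_apply, Matrix.submatrix_apply, he2symm_l]
          simp only [hA₅, Matrix.of_apply, if_neg s.2]
          exact F3 s t
        · cases v
          simp only [Matrix.reindex_apply, Matrix.submatrix_apply, he2symm_l, he2symm_r]
          simp only [hA₅, Matrix.of_apply, if_neg s.2]
          rfl
        · cases u
          simp only [Matrix.reindex_apply, Matrix.submatrix_apply, he2symm_l, he2symm_r]
          simp [hA₅, t.2, Ne.symm t.2]
        · cases u; cases v
          simp only [Matrix.reindex_apply, Matrix.submatrix_apply, he2symm_r]
          simp [hA₅, Matrix.one_apply]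
      rw [hre, Matrix.det_fromBlocks_zero₂₁]
      simp
    have h5 : (N₃.submatrix sw id).det = A₅.det := by
      rw [hblock5, Matrix.det_fromBlocks_zero₁₂]
      simp
    have hN2A5 : N₂.det = A₅.det := by
      rw [hstep1, ← hstep2]
      exact h5
    rw [hN2A5, hdetA₅]
  -- assemble
  have hsplit : MΓ.det = (X + 1) * A.det + (-X) * A'.det := by
    rw [hdet_split, hdet1, hdet2]
  -- Xchar expressions
  have hXΓ : Xchar KΓ L = (-1 : ℚ[X]) ^ (Fintype.card (Fin m ⊕ Unit)) * MΓ.det := by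
    rw [Xchar_eq_detMM KΓ (cartan_sym Γ) (cartan_diag Γ) hL]
    rw [det_MM_indep Γ (invAt_attach G₁ hacy a) hL hLc]
  have hX₁ : Xchar K₁ L₁ = (-1 : ℚ[X]) ^ m * A.det := by
    rw [Xchar_eq_detMM K₁ (cartan_sym G₁) (cartan_diag G₁) hL₁]
    rw [det_MM_indep G₁ (invAt_of_embed G₁ G₁ hacy id (fun x y h => h) (fun u v h => h)) hL₁ hLc₁]
    simp
    rfl
  have hX' : Xchar K' L₁' = (-1 : ℚ[X]) ^ (m - 1) * A'.det := by
    rw [Xchar_eq_detMM K' (cartan_sym Γ') (cartan_diag Γ') hL₁']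
    congr 2
    rw [Fintype.card_subtype_compl, Fintype.card_subtype_eq, Fintype.card_fin]
  obtain ⟨m', rfl⟩ : ∃ m', m = m' + 1 := ⟨m - 1, by
    have hm : m ≠ 0 := fun h => Fin.elim0 (h ▸ a)
    omega⟩
  rw [hXΓ, hX₁, hX', hsplit]
  have hcard : Fintype.card (Fin (m' + 1) ⊕ Unit) = m' + 2 := by
    simp
  rw [hcard]
  have hm1 : m' + 1 - 1 = m' := by omega
  rw [hm1]
  ring

end

end
end

section
/- If λ ≠ ±1 is an eigenvalue of the Coxeter transformation C of a graph with nonnegative definite Tits form B, then |λ| = 1. -/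
open Polynomial Matrix

noncomputable section
open scoped Classical
namespace CoxAux

variable {n : ℕ}

lemma reflOf_mulVec (R : Type*) [CommRing R] (K : Matrix (Fin n) (Fin n) R) (i : Fin n)
    (u : Fin n → R) :
    (reflOf R K i) *ᵥ u = u - (K *ᵥ u) i • (Pi.single i 1 : Fin n → R) := by
  funext j
  simp only [reflOf, Matrix.mulVec, dotProduct, Pi.sub_apply, Pi.smul_apply,
    sub_mul, Finset.sum_sub_distrib, ite_mul, one_mul, zero_mul, smul_eq_mul]
  rw [Finset.sum_ite_eq]
  by_cases h : j = i
  · subst h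
    simp [Finset.mul_sum]
  · simp [h, Pi.single_eq_of_ne h]

lemma dot_symm {R : Type*} [CommRing R] (M : Matrix (Fin n) (Fin n) R)
    (h : ∀ a b, M a b = M b a) (u v : Fin n → R) :
    u ⬝ᵥ (M *ᵥ v) = v ⬝ᵥ (M *ᵥ u) := by
  simp only [dotProduct, Matrix.mulVec, Finset.mul_sum]
  rw [Finset.sum_comm]
  refine Finset.sum_congr rfl fun a _ => Finset.sum_congr rfl fun b _ => ?_
  rw [h a b]; ring

lemma refl_invariant {K Bc : Matrix (Fin n) (Fin n) ℂ} {i : Fin n} {t : ℂ}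
    (hrow : ∀ k, K i k = t * Bc i k) (hKii : K i i = 2)
    (hBs : ∀ a b, Bc a b = Bc b a) (u v : Fin n → ℂ) :
    ((reflOf ℂ K i) *ᵥ u) ⬝ᵥ (Bc *ᵥ ((reflOf ℂ K i) *ᵥ v)) = u ⬝ᵥ (Bc *ᵥ v) := by
  rw [reflOf_mulVec, reflOf_mulVec]
  have hc : (K *ᵥ u) i = t * (Bc *ᵥ u) i := by
    simp only [Matrix.mulVec, dotProduct, Finset.mul_sum]
    exact Finset.sum_congr rfl fun k _ => by rw [hrow k]; ring
  have hd : (K *ᵥ v) i = t * (Bc *ᵥ v) i := by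
    simp only [Matrix.mulVec, dotProduct, Finset.mul_sum]
    exact Finset.sum_congr rfl fun k _ => by rw [hrow k]; ring
  have hBii : t * Bc i i = 2 := by rw [← hrow i, hKii]
  simp only [Matrix.mulVec_sub, Matrix.mulVec_smul, sub_dotProduct,
    dotProduct_sub, dotProduct_smul, smul_dotProduct, smul_eq_mul,
    Matrix.mulVec_single, mul_one, single_dotProduct, one_mul, Matrix.col_apply',
    MulOpposite.op_one, one_smul]
  have h1 : u ⬝ᵥ (fun j => Bc j i) = (Bc *ᵥ u) i := by
    simp only [dotProduct, Matrix.mulVec]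
    exact Finset.sum_congr rfl fun k _ => by rw [hBs k i]; ring
  rw [hc, hd, h1]
  linear_combination (t * (Bc *ᵥ u) i * (Bc *ᵥ v) i) * hBii

lemma coxeterOf_cons (R : Type*) [CommRing R] (K : Matrix (Fin n) (Fin n) R) (i : Fin n)
    (L : List (Fin n)) : coxeterOf R K (i :: L) = reflOf R K i * coxeterOf R K L := by
  simp [coxeterOf]

lemma cox_invariant {K Bc : Matrix (Fin n) (Fin n) ℂ}
    (hyp : ∀ i, ∃ t : ℂ, (∀ k, K i k = t * Bc i k) ∧ K i i = 2)
    (hBs : ∀ a b, Bc a b = Bc b a) :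
    ∀ (L : List (Fin n)) (u v : Fin n → ℂ),
      ((coxeterOf ℂ K L) *ᵥ u) ⬝ᵥ (Bc *ᵥ ((coxeterOf ℂ K L) *ᵥ v)) = u ⬝ᵥ (Bc *ᵥ v) := by
  intro L
  induction L with
  | nil => intro u v; simp [coxeterOf]
  | cons i L ih =>
      intro u v
      obtain ⟨t, hrow, hKii⟩ := hyp i
      rw [coxeterOf_cons, ← Matrix.mulVec_mulVec, ← Matrix.mulVec_mulVec,
        refl_invariant hrow hKii hBs]
      exact ih u v

lemma cox_fix {K : Matrix (Fin n) (Fin n) ℂ} {x : Fin n → ℂ} (hx : K *ᵥ x = 0) :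
    ∀ L : List (Fin n), (coxeterOf ℂ K L) *ᵥ x = x := by
  intro L
  induction L with
  | nil => simp [coxeterOf]
  | cons i L ih =>
      rw [coxeterOf_cons, ← Matrix.mulVec_mulVec, ih, reflOf_mulVec, hx]
      simp

lemma reflOf_map (K : Matrix (Fin n) (Fin n) ℝ) (i : Fin n) :
    (reflOf ℝ K i).map (fun t => (t : ℂ)) = reflOf ℂ (K.map (fun t => (t : ℂ))) i := by
  funext j k
  simp [reflOf, Matrix.map_apply, apply_ite (fun t : ℝ => (t : ℂ))]
  congr

lemma coxeterOf_map (K : Matrix (Fin n) (Fin n) ℝ) (L : List (Fin n)) :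
    coxeterOf ℂ (K.map (fun t => (t : ℂ))) L = (coxeterOf ℝ K L).map (fun t => (t : ℂ)) := by
  induction L with
  | nil =>
      show _ = (1 : Matrix (Fin n) (Fin n) ℝ).map _
      rw [Matrix.map_one _ (by simp) (by simp)]
      simp [coxeterOf]
  | cons i L ih =>
      rw [coxeterOf_cons, coxeterOf_cons, ih, ← reflOf_map]
      exact (Matrix.map_mul (f := Complex.ofRealHom)).symm

lemma map_mulVec_star (A : Matrix (Fin n) (Fin n) ℝ) (x : Fin n → ℂ) :
    (A.map (fun t => (t : ℂ))) *ᵥ (star x) = star ((A.map (fun t => (t : ℂ))) *ᵥ x) := by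
  funext j
  simp only [Matrix.mulVec, dotProduct, Pi.star_apply, Matrix.map_apply]
  rw [star_sum]
  exact Finset.sum_congr rfl fun k _ => by
    rw [star_mul', Complex.star_def, Complex.conj_ofReal]

lemma mulVec_coe (A : Matrix (Fin n) (Fin n) ℝ) (a : Fin n → ℝ) :
    (A.map (fun t => (t : ℂ))) *ᵥ (fun j => (a j : ℂ)) = fun j => ((A *ᵥ a) j : ℂ) := by
  funext j
  simp [Matrix.mulVec, dotProduct, Matrix.map_apply]

lemma dot_coe (u v : Fin n → ℝ) :
    (fun j => (u j : ℂ)) ⬝ᵥ (fun j => (v j : ℂ)) = ((u ⬝ᵥ v : ℝ) : ℂ) := by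
  simp [dotProduct]

lemma z_decomp (z : Fin n → ℂ) :
    z = (fun j => (((z j).re : ℝ) : ℂ)) + Complex.I • (fun j => (((z j).im : ℝ) : ℂ)) := by
  funext j
  simp only [Pi.add_apply, Pi.smul_apply, smul_eq_mul]
  rw [mul_comm]
  exact (Complex.re_add_im (z j)).symm

lemma herm_val (B : Matrix (Fin n) (Fin n) ℝ) (hBs : ∀ a b, B a b = B b a) (z : Fin n → ℂ) :
    (star z) ⬝ᵥ ((B.map (fun t => (t : ℂ))) *ᵥ z)
      = (((fun j => (z j).re) ⬝ᵥ (B *ᵥ fun j => (z j).re)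
          + (fun j => (z j).im) ⬝ᵥ (B *ᵥ fun j => (z j).im) : ℝ) : ℂ) := by
  set a : Fin n → ℝ := fun j => (z j).re with ha
  set b : Fin n → ℝ := fun j => (z j).im with hb
  have hz : z = (fun j => (a j : ℂ)) + Complex.I • (fun j => (b j : ℂ)) := z_decomp z
  have hzs : star z = (fun j => (a j : ℂ)) - Complex.I • (fun j => (b j : ℂ)) := by
    funext j
    simp only [Pi.star_apply, Pi.sub_apply, Pi.smul_apply, smul_eq_mul, ha, hb,
      Complex.star_def]
    apply Complex.ext <;> simp
  rw [hzs, hz]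
  simp only [Matrix.mulVec_add, Matrix.mulVec_smul, sub_dotProduct,
    dotProduct_add, dotProduct_smul, smul_dotProduct, smul_eq_mul,
    mulVec_coe, dot_coe]
  rw [dot_symm B hBs b a]
  push_cast
  linear_combination (-((b ⬝ᵥ (B *ᵥ b) : ℝ) : ℂ)) * Complex.I_mul_I

lemma psd_kernel (B : Matrix (Fin n) (Fin n) ℝ) (hsymm : B.IsSymm)
    (hnonneg : ∀ x : Fin n → ℝ, 0 ≤ x ⬝ᵥ B *ᵥ x) {v : Fin n → ℝ}
    (hv : v ⬝ᵥ B *ᵥ v = 0) : B *ᵥ v = 0 := by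
  have hherm : B.IsHermitian := by
    rw [Matrix.IsHermitian, Matrix.conjTranspose]
    ext i j
    simp [Matrix.map_apply, hsymm.apply]
  have hpsd : B.PosSemidef :=
    Matrix.PosSemidef.of_dotProduct_mulVec_nonneg hherm fun x => by simpa using hnonneg x
  exact (hpsd.dotProduct_mulVec_zero_iff v).mp (by simpa using hv)

end CoxAux
end

/-- If `λ ≠ ±1` is an eigenvalue of the Coxeter transformation of a graph whose
(symmetrized) Tits form `B` is nonnegative definite, then `|λ| = 1`.

Here `K = T·B` is a symmetrizable generalized Cartan matrix (diagonal entries `2`,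
off-diagonal entries nonpositive integers, `k_{ij} = 0 ↔ k_{ji} = 0`), `T` is a diagonal
matrix with positive entries, `B` is symmetric and positive semidefinite, and the Coxeter
transformation is the product of all simple reflections of `K` in any order. -/
theorem eigenvalue_on_unit_circle (n : ℕ)
    (K T B : Matrix (Fin n) (Fin n) ℝ)
    (hdiag : ∀ i, K i i = 2)
    (hoffdiag : ∀ i j, i ≠ j → ∃ m : ℕ, K i j = -(m : ℝ))
    (hzero : ∀ i j, K i j = 0 ↔ K j i = 0)
    (hT : ∀ i j, i ≠ j → T i j = 0) (hTpos : ∀ i, 0 < T i i)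
    (hsymm : B.IsSymm) (hK : K = T * B)
    (hnonneg : ∀ x : Fin n → ℝ, 0 ≤ x ⬝ᵥ B.mulVec x)
    (L : List (Fin n)) (hL : IsEnum L)
    (l : ℂ)
    (hl : (coxeterOf ℂ (K.map (fun t => (t : ℂ))) L).charpoly.IsRoot l)
    (h1 : l ≠ 1) (h2 : l ≠ -1) :
    ‖l‖ = 1 := by
  classical
  have hBs : ∀ a b, B a b = B b a := fun a b => (hsymm.apply a b).symm
  have hKrow : ∀ i k, K i k = T i i * B i k := by
    intro i k
    rw [hK, Matrix.mul_apply]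
    rw [Finset.sum_eq_single i]
    · intro m _ hm
      rw [hT i m (Ne.symm hm), zero_mul]
    · intro h
      exact absurd (Finset.mem_univ i) h
  set Kc : Matrix (Fin n) (Fin n) ℂ := K.map (fun t => (t : ℂ)) with hKc
  set Bc : Matrix (Fin n) (Fin n) ℂ := B.map (fun t => (t : ℂ)) with hBc
  set Cc : Matrix (Fin n) (Fin n) ℂ := coxeterOf ℂ Kc L with hCc
  have hBcs : ∀ a b, Bc a b = Bc b a := by
    intro a b
    simp [hBc, Matrix.map_apply, hBs a b]
  have hyp : ∀ i, ∃ t : ℂ, (∀ k, Kc i k = t * Bc i k) ∧ Kc i i = 2 := by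
    intro i
    refine ⟨(T i i : ℂ), fun k => ?_, ?_⟩
    · simp only [hKc, hBc, Matrix.map_apply]
      rw [hKrow i k]
      push_cast
      ring
    · simp [hKc, Matrix.map_apply, hdiag i]
  -- extract an eigenvector
  have hdet : (Matrix.scalar (Fin n) l - Cc).det = 0 := by
    have h := hl
    rw [Polynomial.IsRoot, Matrix.charpoly, eval_det, matPolyEquiv_charmatrix,
      Polynomial.eval_sub, Polynomial.eval_X, Polynomial.eval_C] at h
    exact h
  obtain ⟨y, hy0, hy⟩ := Matrix.exists_mulVec_eq_zero_iff.mpr hdet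
  have heig : Cc *ᵥ y = l • y := by
    rw [Matrix.sub_mulVec] at hy
    have hs : (Matrix.scalar (Fin n) l) *ᵥ y = l • y := by
      funext j
      rw [Matrix.scalar_apply, Matrix.mulVec_diagonal]
      simp
    rw [hs] at hy
    exact (sub_eq_zero.mp hy).symm
  have hCm : Cc = (coxeterOf ℝ K L).map (fun t => (t : ℂ)) := CoxAux.coxeterOf_map K L
  have hstar : ∀ w : Fin n → ℂ, Cc *ᵥ (star w) = star (Cc *ᵥ w) := by
    intro w
    rw [hCm]
    exact CoxAux.map_mulVec_star _ w
  set z : Fin n → ℂ := star y with hzdef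
  have hz0 : z ≠ 0 := by
    intro h
    apply hy0
    have h2 := congrArg star h
    rw [hzdef, star_star] at h2
    simpa using h2
  have heigz : Cc *ᵥ z = star l • z := by
    rw [hzdef, hstar, heig]
    funext j
    simp [Pi.star_apply, Pi.smul_apply, smul_eq_mul, star_mul']
  set a : Fin n → ℝ := fun j => (z j).re with ha
  set b : Fin n → ℝ := fun j => (z j).im with hb
  have hval : y ⬝ᵥ (Bc *ᵥ z) = ((a ⬝ᵥ (B *ᵥ a) + b ⬝ᵥ (B *ᵥ b) : ℝ) : ℂ) := by
    have h := CoxAux.herm_val B hBs z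
    rw [hzdef, star_star] at h
    exact h
  by_cases hcase : a ⬝ᵥ (B *ᵥ a) + b ⬝ᵥ (B *ᵥ b) = 0
  · -- isotropic case: the eigenvector is fixed by the Coxeter transformation
    exfalso
    have hqa : a ⬝ᵥ (B *ᵥ a) = 0 := le_antisymm (by linarith [hnonneg b]) (hnonneg a)
    have hqb : b ⬝ᵥ (B *ᵥ b) = 0 := le_antisymm (by linarith [hnonneg a]) (hnonneg b)
    have hBa : B *ᵥ a = 0 := CoxAux.psd_kernel B hsymm hnonneg hqa
    have hBb : B *ᵥ b = 0 := CoxAux.psd_kernel B hsymm hnonneg hqb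
    have hBz : Bc *ᵥ z = 0 := by
      have hzd := CoxAux.z_decomp z
      rw [hzd, Matrix.mulVec_add, Matrix.mulVec_smul, hBc, CoxAux.mulVec_coe,
        CoxAux.mulVec_coe]
      rw [hBa, hBb]
      funext j
      simp
    have hKz : Kc *ᵥ z = 0 := by
      funext i
      have hrel : (Kc *ᵥ z) i = (T i i : ℂ) * (Bc *ᵥ z) i := by
        simp only [Matrix.mulVec, dotProduct, Finset.mul_sum, hKc, hBc,
          Matrix.map_apply]
        refine Finset.sum_congr rfl fun k _ => ?_
        rw [hKrow i k]
        push_cast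
        ring
      rw [Pi.zero_apply, hrel, hBz, Pi.zero_apply, mul_zero]
    have hfix : Cc *ᵥ z = z := CoxAux.cox_fix hKz L
    have hlz : star l • z = z := by rw [← heigz, hfix]
    have : (star l - 1) • z = 0 := by
      rw [sub_smul, one_smul, hlz, sub_self]
    rcases smul_eq_zero.mp this with h | h
    · apply h1
      have hsl : star l = 1 := sub_eq_zero.mp h
      calc l = star (star l) := (star_star l).symm
        _ = star 1 := by rw [hsl]
        _ = 1 := star_one ℂ
    · exact hz0 h
  · -- non-isotropic case: |l| = 1
    have hinv := CoxAux.cox_invariant hyp hBcs L y z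
    rw [heig, heigz, Matrix.mulVec_smul, smul_dotProduct, dotProduct_smul,
      smul_eq_mul, smul_eq_mul] at hinv
    have hne : y ⬝ᵥ (Bc *ᵥ z) ≠ 0 := by
      rw [hval]
      exact_mod_cast hcase
    have hmul : l * star l = 1 := by
      have h0 : (l * star l - 1) * (y ⬝ᵥ (Bc *ᵥ z)) = 0 := by linear_combination hinv
      rcases mul_eq_zero.mp h0 with h' | h'
      · exact sub_eq_zero.mp h'
      · exact absurd h' hne
    have hnsq : Complex.normSq l = 1 := by
      have : ((Complex.normSq l : ℝ) : ℂ) = 1 := by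
        rw [← Complex.mul_conj]
        exact hmul
      exact_mod_cast this
    rw [Complex.norm_def, hnsq, Real.sqrt_one]
end
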